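/- arXiv:1501.06556 — 5 statements merged into one kernel-verified Lean document; each statement's English description precedes it below -/
import Mathlib

section
/- (Localized Poincaré inequality.) Let (Ω,d,μ) be a metric measure space with μ(Ω) < ∞ whose isoperimetric profile I is concave, continuous, I(0) = 0, strictly positive on (0, μ(Ω)), symmetric about μ(Ω)/2, and increasing on (0, μ(Ω)/2]. Let f : Ω → ℝ be Lipschitz and integrable with |∇f| integrable, let m be a median of f, and assume the co-area inequality for f: ∫_{−∞}^{∞} I(μ{f > s}) ds ≤ ∫_Ω |∇f| dμ. Then for every measurable A ⊆ Ω with μ(A) > 0, ∫_A |f − m| dμ ≤ [min{μ(A), μ(Ω)/2} / I(min{μ(A), μ(Ω)/2})] · ∫_Ω |∇f| dμ. -/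
open MeasureTheory Filter Set Topology
open scoped ENNReal NNReal

/-- The modulus of the gradient of `f` at `x`:
`|∇f|(x) = limsup_{y→x} |f(x) - f(y)| / d(x,y)`. -/
noncomputable def gradMod {Ω : Type*} [MetricSpace Ω] (f : Ω → ℝ) (x : Ω) : ℝ :=
  Filter.limsup (fun y => |f x - f y| / dist x y) (𝓝[≠] x)

/-- The Minkowski content (perimeter) of a set `A`:
`μ⁺(A) = liminf_{h→0⁺} (μ(A_h) - μ(A))/h`, where `A_h` is the open `h`-thickening of `A`. -/
noncomputable def minkContent {Ω : Type*} [MetricSpace Ω] [MeasurableSpace Ω]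
    (μ : Measure Ω) (A : Set Ω) : ℝ≥0∞ :=
  Filter.liminf (fun h : ℝ => (μ (Metric.thickening h A) - μ A) / ENNReal.ofReal h)
    (𝓝[>] (0 : ℝ))

/-- The isoperimetric profile of `(Ω,d,μ)`:
`I(t) = inf {μ⁺(A) : A Borel, μ(A) = t}`. -/
noncomputable def isoProfile {Ω : Type*} [MetricSpace Ω] [MeasurableSpace Ω]
    (μ : Measure Ω) (t : ℝ≥0∞) : ℝ≥0∞ :=
  ⨅ (A : Set Ω) (_ : MeasurableSet A) (_ : μ A = t), minkContent μ A

/-- `m` is a median of `f` with respect to `μ`. -/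
def IsMedian {Ω : Type*} [MeasurableSpace Ω] (μ : Measure Ω) (f : Ω → ℝ) (m : ℝ) : Prop :=
  μ Set.univ / 2 ≤ μ {x | m ≤ f x} ∧ μ Set.univ / 2 ≤ μ {x | f x ≤ m}

lemma gradMod_nonneg {Ω : Type*} [MetricSpace Ω] {K : ℝ≥0} {f : Ω → ℝ}
    (hlip : LipschitzWith K f) (x : Ω) : 0 ≤ gradMod f x := by
  unfold gradMod
  rcases eq_or_neBot (𝓝[≠] x) with h | h
  · rw [h, Filter.limsup, Filter.limsSup]
    have : {a : ℝ | ∀ᶠ n in Filter.map (fun y => |f x - f y| / dist x y) (⊥ : Filter Ω), n ≤ a}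
        = Set.univ := by ext a; simp
    rw [this]
    exact le_of_eq (Real.sInf_of_not_bddBelow not_bddBelow_univ).symm
  · apply Filter.le_limsup_of_frequently_le
    · exact Filter.Eventually.frequently (Filter.Eventually.of_forall fun y =>
        div_nonneg (abs_nonneg _) dist_nonneg)
    · refine ⟨(K : ℝ), ?_⟩
      rw [Filter.eventually_map]
      filter_upwards [self_mem_nhdsWithin] with y hy
      have hd : 0 < dist x y := dist_pos.2 (Ne.symm hy)
      rw [div_le_iff₀ hd]
      exact (hlip.dist_le_mul x y).trans_eq' (by rw [Real.dist_eq])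

/-- translation change of variables for set lintegrals -/
lemma shift_lintegral (F : ℝ → ℝ≥0∞) (m : ℝ) :
    ∫⁻ s in Set.Ioi (0:ℝ), F (m + s) = ∫⁻ s in Set.Ioi m, F s := by
  rw [← lintegral_indicator measurableSet_Ioi, ← lintegral_indicator measurableSet_Ioi]
  have h : ∀ s : ℝ, (Set.Ioi (0:ℝ)).indicator (fun s => F (m + s)) s
      = (Set.Ioi m).indicator F (m + s) := by
    intro s
    simp only [Set.indicator_apply, Set.mem_Ioi]
    by_cases hs : 0 < s
    · rw [if_pos hs, if_pos (by linarith)]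
    · rw [if_neg hs, if_neg (by intro h; exact hs (by linarith))]
  rw [lintegral_congr h]
  exact lintegral_add_left_eq_self ((Set.Ioi m).indicator F) m

lemma reflect_lintegral (F : ℝ → ℝ≥0∞) (m : ℝ) :
    ∫⁻ s in Set.Ioi (0:ℝ), F (m - s) = ∫⁻ s in Set.Iio m, F s := by
  rw [← lintegral_indicator measurableSet_Ioi, ← lintegral_indicator measurableSet_Iio]
  have h : ∀ s : ℝ, (Set.Ioi (0:ℝ)).indicator (fun s => F (m - s)) s
      = (Set.Iio m).indicator F (m + (-s)) := by
    intro s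
    simp only [Set.indicator_apply, Set.mem_Ioi, Set.mem_Iio]
    by_cases hs : 0 < s
    · rw [if_pos hs, if_pos (by linarith)]
      rw [← sub_eq_add_neg]
    · rw [if_neg hs, if_neg (by intro h; exact hs (by linarith))]
  rw [lintegral_congr h]
  have hmap : Measure.map (⇑(MeasurableEquiv.neg ℝ)) (volume : Measure ℝ) = volume := by
    rw [show ⇑(MeasurableEquiv.neg ℝ) = (Neg.neg : ℝ → ℝ) from rfl]
    exact Measure.map_neg_eq_self (volume : Measure ℝ)
  have h1 : ∫⁻ s : ℝ, (fun u => (Set.Iio m).indicator F (m + u)) (-s)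
      = ∫⁻ s : ℝ, (Set.Iio m).indicator F (m + s) := by
    have := lintegral_map_equiv (μ := (volume : Measure ℝ))
      (fun u => (Set.Iio m).indicator F (m + u)) (MeasurableEquiv.neg ℝ)
    rw [hmap] at this
    exact this.symm
  calc ∫⁻ s : ℝ, (Set.Iio m).indicator F (m + (-s))
      = ∫⁻ s : ℝ, (Set.Iio m).indicator F (m + s) := h1
    _ = ∫⁻ s : ℝ, (Set.Iio m).indicator F s := lintegral_add_left_eq_self _ m


/-- **localized Poincaré inequality.** On a finite metric measure space whose
isoperimetric profile `I` is concave, continuous, zero at zero, positive on `(0, μ(Ω))`,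
symmetric about `μ(Ω)/2` and increasing on `(0, μ(Ω)/2]`, every Lipschitz integrable `f`
with integrable modulus of gradient satisfying the co-area inequality obeys, for every
measurable `A` of positive measure,
`∫_A |f - m| dμ ≤ (min{μA, μΩ/2} / I(min{μA, μΩ/2})) ∫_Ω |∇f| dμ`,
where `m` is a median of `f`. -/
theorem localized_poincare {Ω : Type*} [MetricSpace Ω] [MeasurableSpace Ω] [BorelSpace Ω]
    (μ : Measure Ω) [IsFiniteMeasure μ] [IsFiniteMeasureOnCompacts μ]
    (I : ℝ → ℝ)
    (hIprof : ∀ t : ℝ, 0 ≤ t → ENNReal.ofReal t < μ Set.univ →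
      ENNReal.ofReal (I t) = isoProfile μ (ENNReal.ofReal t))
    (hIconc : ConcaveOn ℝ (Set.Icc 0 (μ Set.univ).toReal) I)
    (hIcont : ContinuousOn I (Set.Icc 0 (μ Set.univ).toReal))
    (hI0 : I 0 = 0)
    (hIpos : ∀ t : ℝ, 0 < t → t < (μ Set.univ).toReal → 0 < I t)
    (hIsym : ∀ t ∈ Set.Icc 0 (μ Set.univ).toReal, I ((μ Set.univ).toReal - t) = I t)
    (hImono : MonotoneOn I (Set.Ioc 0 ((μ Set.univ).toReal / 2)))
    (K : ℝ≥0) (f : Ω → ℝ) (hlip : LipschitzWith K f)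
    (hfint : Integrable f μ) (hgint : Integrable (gradMod f) μ)
    (m : ℝ) (hm : IsMedian μ f m)
    (hcoarea : ∫⁻ s : ℝ, ENNReal.ofReal (I ((μ {x | s < f x}).toReal)) ≤
      ENNReal.ofReal (∫ x, gradMod f x ∂μ)) :
    ∀ A : Set Ω, MeasurableSet A → 0 < μ A →
      ∫ x in A, |f x - m| ∂μ ≤
        (min (μ A).toReal ((μ Set.univ).toReal / 2) /
          I (min (μ A).toReal ((μ Set.univ).toReal / 2))) * ∫ x, gradMod f x ∂μ := by
  intro A hA hApos
  have hf_meas : Measurable f := hlip.continuous.measurable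
  have hTne : μ Set.univ ≠ ∞ := measure_ne_top μ _
  have hAne : μ A ≠ ∞ := measure_ne_top μ _
  have hTpos : 0 < μ Set.univ := lt_of_lt_of_le hApos (measure_mono (Set.subset_univ A))
  set Tr : ℝ := (μ Set.univ).toReal with hTr
  have hTrpos : 0 < Tr := ENNReal.toReal_pos hTpos.ne' hTne
  set t : ℝ := min (μ A).toReal (Tr / 2) with ht
  have htpos : 0 < t := lt_min (ENNReal.toReal_pos hApos.ne' hAne) (by positivity)
  have ht_half : t ≤ Tr / 2 := min_le_right _ _
  have ht_lt : t < Tr := lt_of_le_of_lt ht_half (half_lt_self hTrpos)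
  have hIt : 0 < I t := hIpos t htpos ht_lt
  set C : ℝ≥0∞ := ENNReal.ofReal (t / I t) with hC
  have hCne : C ≠ ∞ := ENNReal.ofReal_ne_top
  have hgnonneg : 0 ≤ ∫ x, gradMod f x ∂μ := integral_nonneg (gradMod_nonneg hlip)
  have hhalfr : (μ Set.univ / 2).toReal = Tr / 2 := by
    rw [ENNReal.toReal_div]; norm_num; rfl
  -- key concavity estimate
  have hkey : ∀ u v : ℝ, 0 ≤ u → u ≤ t → u ≤ v → v ≤ Tr / 2 →
      ENNReal.ofReal u ≤ C * ENNReal.ofReal (I v) := by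
    intro u v hu hut huv hv
    rcases eq_or_lt_of_le hu with h0 | h0
    · simp [← h0]
    · have hvpos : 0 < v := lt_of_lt_of_le h0 huv
      have hIu_le : I u ≤ I v := hImono ⟨h0, le_trans hut ht_half⟩ ⟨hvpos, hv⟩ huv
      have hconc : u / t * I t ≤ I u := by
        have h0mem : (0:ℝ) ∈ Set.Icc 0 Tr := ⟨le_refl _, hTrpos.le⟩
        have htmem : t ∈ Set.Icc 0 Tr := ⟨htpos.le, ht_lt.le⟩
        have ha : (0:ℝ) ≤ 1 - u / t := by
          have : u / t ≤ 1 := (div_le_one htpos).2 hut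
          linarith
        have hb : (0:ℝ) ≤ u / t := div_nonneg hu htpos.le
        have hab : (1 - u / t) + u / t = 1 := by ring
        have := hIconc.2 h0mem htmem ha hb hab
        simp only [smul_eq_mul, mul_zero, hI0, mul_zero, zero_add] at this
        have harg : u / t * t = u := div_mul_cancel₀ u htpos.ne'
        rw [harg] at this
        linarith [this]
      have hmain : u ≤ t / I t * I v := by
        rw [div_mul_eq_mul_div, le_div_iff₀ hIt]
        have h1 : u / t * I t * t ≤ I u * t := mul_le_mul_of_nonneg_right hconc htpos.le
        have h2 : u / t * I t * t = u * I t := by field_simp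
        have h3 : I u * t ≤ I v * t := mul_le_mul_of_nonneg_right hIu_le htpos.le
        nlinarith
      calc ENNReal.ofReal u ≤ ENNReal.ofReal (t / I t * I v) := ENNReal.ofReal_le_ofReal hmain
        _ = C * ENNReal.ofReal (I v) := ENNReal.ofReal_mul (div_nonneg htpos.le hIt.le)
  -- median bounds
  have hmed1 : ∀ s : ℝ, 0 ≤ s → μ {x | m + s < f x} ≤ μ Set.univ / 2 := by
    intro s hs
    have hsub : {x | m + s < f x} ⊆ {x | f x ≤ m}ᶜ := by
      intro x hx hx'
      simp only [Set.mem_setOf_eq] at hx hx'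
      linarith
    calc μ {x | m + s < f x} ≤ μ ({x | f x ≤ m}ᶜ) := measure_mono hsub
      _ = μ Set.univ - μ {x | f x ≤ m} := measure_compl (measurableSet_le hf_meas measurable_const) (measure_ne_top μ _)
      _ ≤ μ Set.univ - μ Set.univ / 2 := tsub_le_tsub_left hm.2 _
      _ = μ Set.univ / 2 := ENNReal.sub_half hTne
  have hmed2 : ∀ s : ℝ, 0 < s → μ {x | f x ≤ m - s} ≤ μ Set.univ / 2 := by
    intro s hs
    have hsub : {x | f x ≤ m - s} ⊆ {x | m ≤ f x}ᶜ := by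
      intro x hx hx'
      simp only [Set.mem_setOf_eq] at hx hx'
      linarith
    calc μ {x | f x ≤ m - s} ≤ μ ({x | m ≤ f x}ᶜ) := measure_mono hsub
      _ = μ Set.univ - μ {x | m ≤ f x} := measure_compl (measurableSet_le measurable_const hf_meas) (measure_ne_top μ _)
      _ ≤ μ Set.univ - μ Set.univ / 2 := tsub_le_tsub_left hm.1 _
      _ = μ Set.univ / 2 := ENNReal.sub_half hTne
  set F : ℝ → ℝ≥0∞ := fun s => ENNReal.ofReal (I ((μ {x | s < f x}).toReal)) with hF
  -- pointwise bounds for the layercake integrands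
  have hbound1 : ∀ s ∈ Set.Ioi (0:ℝ),
      μ.restrict A {x | s < max (f x - m) 0} ≤ C * F (m + s) := by
    intro s hs
    rw [Set.mem_Ioi] at hs
    have hset : {x | s < max (f x - m) 0} = {x | m + s < f x} := by
      ext x; simp only [Set.mem_setOf_eq, lt_max_iff]
      constructor
      · rintro (h | h) <;> linarith
      · intro h; left; linarith
    rw [hset, Measure.restrict_apply (measurableSet_lt measurable_const hf_meas)]
    have h1 : μ ({x | m + s < f x} ∩ A) ≤ μ {x | m + s < f x} := measure_mono Set.inter_subset_left
    have h2 : μ ({x | m + s < f x} ∩ A) ≤ μ A := measure_mono Set.inter_subset_right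
    have hfin : μ ({x | m + s < f x} ∩ A) ≠ ∞ := measure_ne_top μ _
    have hv : (μ {x | m + s < f x}).toReal ≤ Tr / 2 := by
      rw [← hhalfr]
      exact ENNReal.toReal_mono (by simp [ENNReal.div_eq_top, hTne]) (hmed1 s hs.le)
    have hu_t : (μ ({x | m + s < f x} ∩ A)).toReal ≤ t :=
      le_min (ENNReal.toReal_mono hAne h2)
        ((ENNReal.toReal_mono (measure_ne_top μ _) h1).trans hv)
    have := hkey (μ ({x | m + s < f x} ∩ A)).toReal (μ {x | m + s < f x}).toReal
      ENNReal.toReal_nonneg hu_t (ENNReal.toReal_mono (measure_ne_top μ _) h1) hv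
    rwa [ENNReal.ofReal_toReal hfin] at this
  have hbound2 : ∀ s ∈ Set.Ioi (0:ℝ),
      μ.restrict A {x | s < max (m - f x) 0} ≤ C * F (m - s) := by
    intro s hs
    rw [Set.mem_Ioi] at hs
    have hset : {x | s < max (m - f x) 0} = {x | f x < m - s} := by
      ext x; simp only [Set.mem_setOf_eq, lt_max_iff]
      constructor
      · rintro (h | h) <;> linarith
      · intro h; left; linarith
    rw [hset, Measure.restrict_apply (measurableSet_lt hf_meas measurable_const)]
    have h1 : μ ({x | f x < m - s} ∩ A) ≤ μ {x | f x ≤ m - s} :=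
      measure_mono (fun x hx => show f x ≤ m - s from le_of_lt hx.1)
    have h2 : μ ({x | f x < m - s} ∩ A) ≤ μ A := measure_mono Set.inter_subset_right
    have hfin : μ ({x | f x < m - s} ∩ A) ≠ ∞ := measure_ne_top μ _
    have hv : (μ {x | f x ≤ m - s}).toReal ≤ Tr / 2 := by
      rw [← hhalfr]
      exact ENNReal.toReal_mono (by simp [ENNReal.div_eq_top, hTne]) (hmed2 s hs)
    have hu_t : (μ ({x | f x < m - s} ∩ A)).toReal ≤ t :=
      le_min (ENNReal.toReal_mono hAne h2)
        ((ENNReal.toReal_mono (measure_ne_top μ _) h1).trans hv)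
    have hkey' := hkey (μ ({x | f x < m - s} ∩ A)).toReal (μ {x | f x ≤ m - s}).toReal
      ENNReal.toReal_nonneg hu_t (ENNReal.toReal_mono (measure_ne_top μ _) h1) hv
    rw [ENNReal.ofReal_toReal hfin] at hkey'
    -- symmetry : I (μ {f ≤ m-s}).toReal = I (μ {m-s < f}).toReal
    have hcompl : {x | f x ≤ m - s} = {x | m - s < f x}ᶜ := by
      ext x; simp [Set.mem_setOf_eq, not_lt]
    have hmeas_eq : μ {x | f x ≤ m - s} = μ Set.univ - μ {x | m - s < f x} := by
      rw [hcompl, measure_compl (measurableSet_lt measurable_const hf_meas) (measure_ne_top μ _)]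
    have htoReal : (μ {x | f x ≤ m - s}).toReal = Tr - (μ {x | m - s < f x}).toReal := by
      rw [hmeas_eq, ENNReal.toReal_sub_of_le (measure_mono (Set.subset_univ _)) hTne]
    have hsymm : I ((μ {x | f x ≤ m - s}).toReal) = I ((μ {x | m - s < f x}).toReal) := by
      rw [htoReal]
      exact hIsym _ ⟨ENNReal.toReal_nonneg,
        ENNReal.toReal_mono hTne (measure_mono (Set.subset_univ _))⟩
    rwa [hsymm] at hkey'
  -- layer cake representations
  have hmax_meas : Measurable fun x => max (f x - m) 0 :=
    (hf_meas.sub measurable_const).max measurable_const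
  have hmax_meas' : Measurable fun x => max (m - f x) 0 :=
    (measurable_const.sub hf_meas).max measurable_const
  have hlc1 : ∫⁻ x in A, ENNReal.ofReal (max (f x - m) 0) ∂μ
      = ∫⁻ s in Set.Ioi (0:ℝ), μ.restrict A {x | s < max (f x - m) 0} :=
    lintegral_eq_lintegral_meas_lt (μ.restrict A)
      (Filter.Eventually.of_forall fun x => le_max_right _ _) hmax_meas.aemeasurable
  have hlc2 : ∫⁻ x in A, ENNReal.ofReal (max (m - f x) 0) ∂μ
      = ∫⁻ s in Set.Ioi (0:ℝ), μ.restrict A {x | s < max (m - f x) 0} :=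
    lintegral_eq_lintegral_meas_lt (μ.restrict A)
      (Filter.Eventually.of_forall fun x => le_max_right _ _) hmax_meas'.aemeasurable
  -- bound the two layer cake integrals
  have hP : ∫⁻ x in A, ENNReal.ofReal (max (f x - m) 0) ∂μ ≤ C * ∫⁻ s in Set.Ioi m, F s := by
    rw [hlc1, ← shift_lintegral F m, ← lintegral_const_mul' C _ hCne]
    exact setLIntegral_mono' measurableSet_Ioi hbound1
  have hN : ∫⁻ x in A, ENNReal.ofReal (max (m - f x) 0) ∂μ ≤ C * ∫⁻ s in Set.Iio m, F s := by
    rw [hlc2, ← reflect_lintegral F m, ← lintegral_const_mul' C _ hCne]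
    exact setLIntegral_mono' measurableSet_Ioi hbound2
  -- sum of the two set lintegrals of F is at most the full lintegral
  have hsum : (∫⁻ s in Set.Ioi m, F s) + ∫⁻ s in Set.Iio m, F s ≤ ∫⁻ s : ℝ, F s := by
    rw [← lintegral_union measurableSet_Iio (by
      rw [Set.disjoint_iff]; intro x hx; exact absurd (lt_trans hx.2 hx.1) (lt_irrefl x))]
    exact setLIntegral_le_lintegral _ _
  -- split |f - m|
  have hsplit : ∫⁻ x in A, ENNReal.ofReal |f x - m| ∂μ
      = (∫⁻ x in A, ENNReal.ofReal (max (f x - m) 0) ∂μ)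
        + ∫⁻ x in A, ENNReal.ofReal (max (m - f x) 0) ∂μ := by
    rw [← lintegral_add_left (hmax_meas.ennreal_ofReal)]
    apply lintegral_congr
    intro x
    rw [← ENNReal.ofReal_add (le_max_right _ _) (le_max_right _ _)]
    congr 1
    rcases le_total (f x) m with h | h
    · rw [abs_of_nonpos (by linarith), max_eq_right (by linarith), max_eq_left (by linarith)]
      ring
    · rw [abs_of_nonneg (by linarith), max_eq_left (by linarith), max_eq_right (by linarith)]
      ring
  -- put everything together in ℝ≥0∞
  have hchain : ENNReal.ofReal (∫ x in A, |f x - m| ∂μ)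
      ≤ ENNReal.ofReal ((t / I t) * ∫ x, gradMod f x ∂μ) := by
    have hint : Integrable (fun x => |f x - m|) (μ.restrict A) :=
      ((hfint.sub (integrable_const m)).abs).restrict
    rw [ofReal_integral_eq_lintegral_ofReal hint
      (Filter.Eventually.of_forall fun x => abs_nonneg _)]
    calc ∫⁻ x in A, ENNReal.ofReal |f x - m| ∂μ
        ≤ C * (∫⁻ s in Set.Ioi m, F s) + C * ∫⁻ s in Set.Iio m, F s := by
          rw [hsplit]; exact add_le_add hP hN
      _ = C * ((∫⁻ s in Set.Ioi m, F s) + ∫⁻ s in Set.Iio m, F s) := (mul_add _ _ _).symm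
      _ ≤ C * ∫⁻ s : ℝ, F s := mul_le_mul_right hsum C
      _ ≤ C * ENNReal.ofReal (∫ x, gradMod f x ∂μ) := mul_le_mul_right hcoarea C
      _ = ENNReal.ofReal ((t / I t) * ∫ x, gradMod f x ∂μ) :=
          (ENNReal.ofReal_mul (div_nonneg htpos.le hIt.le)).symm
  rw [ENNReal.ofReal_le_ofReal_iff
    (mul_nonneg (div_nonneg htpos.le hIt.le) hgnonneg)] at hchain
  exact hchain
end

section
/- (L¹ uncertainty, finite measure, mean zero.) Let (Ω,d,μ) be a metric measure space with μ(Ω) < ∞ whose isoperimetric profile I is concave, continuous, I(0) = 0, strictly positive on (0, μ(Ω)), symmetric about μ(Ω)/2, and increasing on (0, μ(Ω)/2]. Set Φ(t) = min{t, μ(Ω)/2}/I(min{t, μ(Ω)/2}), and let w : Ω → (0,∞) be an isoperimetric weight with constant C(w) = sup_{r>0} (1/r)·Φ(μ{w ≤ r}) < ∞. Let α > 0 and let f : Ω → ℝ be Lipschitz and integrable with |∇f| and w^α f integrable, such that ∫_Ω f dμ = 0, and assume the co-area inequality for f: ∫_{−∞}^{∞} I(μ{f > s}) ds ≤ ∫_Ω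 |∇f| dμ. Then for every r > 0, ∫_Ω |f| dμ ≤ 2 C(w) r ∫_Ω |∇f| dμ + 2 r^{−α} ∫_Ω w^α |f| dμ. -/
open MeasureTheory Filter Set Topology
open scoped ENNReal NNReal

/-- `Φ(t) = min{t, V/2} / I(min{t, V/2})` where `V = μ(Ω)`. -/
noncomputable def PhiIso (V : ℝ) (I : ℝ → ℝ) (t : ℝ) : ℝ :=
  min t (V / 2) / I (min t (V / 2))

lemma exists_isMedian {Ω : Type*} [MeasurableSpace Ω] (μ : Measure Ω) [IsFiniteMeasure μ]
    (hμ : μ Set.univ ≠ 0) {f : Ω → ℝ} (hf : Measurable f) : ∃ m, IsMedian μ f m := by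
  set S : Set ℝ := {s : ℝ | μ Set.univ / 2 ≤ μ {x | s ≤ f x}} with hS
  have hdown : ∀ s ∈ S, ∀ s' ≤ s, s' ∈ S := by
    intro s hs s' hs'
    exact le_trans hs (measure_mono fun x hx => le_trans hs' hx)
  have hne : S.Nonempty := by
    have hmono : Monotone (fun n : ℕ => {x | -(n : ℝ) ≤ f x}) := by
      intro a b hab x hx
      simp only [Set.mem_setOf_eq] at *
      exact le_trans (neg_le_neg (Nat.cast_le.mpr hab)) hx
    have hU : (⋃ n : ℕ, {x | -(n : ℝ) ≤ f x}) = Set.univ := by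
      ext x; simp only [Set.mem_iUnion, Set.mem_univ, iff_true, Set.mem_setOf_eq]
      obtain ⟨n, hn⟩ := exists_nat_ge (-f x)
      exact ⟨n, by linarith⟩
    have ht := tendsto_measure_iUnion_atTop (μ := μ) hmono
    rw [hU] at ht
    have hlt : μ Set.univ / 2 < μ Set.univ :=
      ENNReal.half_lt_self hμ (measure_ne_top μ _)
    obtain ⟨n, hn⟩ := (ht.eventually (eventually_gt_nhds hlt)).exists
    exact ⟨-(n : ℝ), le_of_lt hn⟩
  have hbdd : BddAbove S := by
    have hanti : Antitone (fun n : ℕ => {x | (n : ℝ) ≤ f x}) := by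
      intro a b hab x hx
      simp only [Set.mem_setOf_eq] at *
      exact le_trans (Nat.cast_le.mpr hab) hx
    have hI : (⋂ n : ℕ, {x | (n : ℝ) ≤ f x}) = ∅ := by
      ext x; simp only [Set.mem_iInter, Set.mem_empty_iff_false, iff_false, not_forall,
        Set.mem_setOf_eq, not_le]
      obtain ⟨n, hn⟩ := exists_nat_gt (f x)
      exact ⟨n, hn⟩
    have ht := tendsto_measure_iInter_atTop (μ := μ)
      (s := fun n : ℕ => {x | (n : ℝ) ≤ f x})
      (fun n => (hf measurableSet_Ici).nullMeasurableSet) hanti ⟨0, measure_ne_top μ _⟩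
    rw [hI, measure_empty] at ht
    have hpos : (0 : ℝ≥0∞) < μ Set.univ / 2 := ENNReal.half_pos hμ
    obtain ⟨n, hn⟩ := (ht.eventually (eventually_lt_nhds hpos)).exists
    refine ⟨n, fun s hs => ?_⟩
    by_contra hcon
    push_neg at hcon
    have : (n : ℝ) ∈ S := hdown s hs n hcon.le
    exact absurd this (fun h => absurd h (not_le.mpr hn))
  set m := sSup S with hm
  refine ⟨m, ?_, ?_⟩
  · have hseq : {x | m ≤ f x} = ⋂ n : ℕ, {x | m - 1/(n+1 : ℝ) ≤ f x} := by
      ext x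
      simp only [Set.mem_iInter, Set.mem_setOf_eq]
      constructor
      · intro h n; have : (0:ℝ) < 1/(n+1 : ℝ) := by positivity
        linarith
      · intro h
        by_contra hc
        push_neg at hc
        obtain ⟨n, hn⟩ := exists_nat_one_div_lt (show (0:ℝ) < m - f x by linarith)
        have := h n
        linarith
    have hanti : Antitone (fun n : ℕ => {x | m - 1/(n+1 : ℝ) ≤ f x}) := by
      intro a b hab x hx
      refine le_trans (sub_le_sub_left ?_ m) hx
      apply one_div_le_one_div_of_le (by positivity)
      exact_mod_cast add_le_add_left (Nat.cast_le.mpr hab) 1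
    have ht := tendsto_measure_iInter_atTop (μ := μ)
      (s := fun n : ℕ => {x | m - 1/(n+1 : ℝ) ≤ f x})
      (fun n => (hf measurableSet_Ici).nullMeasurableSet) hanti
      ⟨0, measure_ne_top μ _⟩
    rw [← hseq] at ht
    refine ge_of_tendsto ht (Eventually.of_forall fun n => ?_)
    have hmem : m - 1/(n+1 : ℝ) ∈ S := by
      obtain ⟨s, hsS, hs⟩ := exists_lt_of_lt_csSup hne
        (show m - 1/(n+1:ℝ) < m by
          have : (0:ℝ) < 1/(n+1 : ℝ) := by positivity
          linarith)
      exact hdown s hsS _ hs.le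
    exact hmem
  · have hnot : ∀ s, m < s → μ Set.univ / 2 ≤ μ {x | f x < s} := by
      intro s hs
      have hsS : s ∉ S := fun h => absurd (le_csSup hbdd h) (not_le.mpr hs)
      have h1 : μ {x | s ≤ f x} < μ Set.univ / 2 := not_le.1 hsS
      by_contra hc
      push_neg at hc
      have : μ Set.univ ≤ μ {x | f x < s} + μ {x | s ≤ f x} := by
        refine le_trans (measure_mono ?_) (measure_union_le _ _)
        intro x _
        rcases lt_or_ge (f x) s with h | h
        · exact Or.inl h
        · exact Or.inr h
      have hlt : μ {x | f x < s} + μ {x | s ≤ f x} < μ Set.univ := by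
        calc μ {x | f x < s} + μ {x | s ≤ f x} < μ Set.univ / 2 + μ Set.univ / 2 :=
              ENNReal.add_lt_add hc h1
          _ = μ Set.univ := ENNReal.add_halves _
      exact absurd (lt_of_le_of_lt this hlt) (lt_irrefl _)
    have hseq : {x | f x ≤ m} = ⋂ n : ℕ, {x | f x < m + 1/(n+1 : ℝ)} := by
      ext x
      simp only [Set.mem_iInter, Set.mem_setOf_eq]
      constructor
      · intro h n; have : (0:ℝ) < 1/(n+1 : ℝ) := by positivity
        linarith
      · intro h
        by_contra hc
        push_neg at hc
        obtain ⟨n, hn⟩ := exists_nat_one_div_lt (show (0:ℝ) < f x - m by linarith)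
        have := h n
        linarith
    have hanti : Antitone (fun n : ℕ => {x | f x < m + 1/(n+1 : ℝ)}) := by
      intro a b hab x hx
      refine lt_of_lt_of_le hx (add_le_add_right ?_ m)
      apply one_div_le_one_div_of_le (by positivity)
      exact_mod_cast add_le_add_left (Nat.cast_le.mpr hab) 1
    have ht := tendsto_measure_iInter_atTop (μ := μ)
      (s := fun n : ℕ => {x | f x < m + 1/(n+1 : ℝ)})
      (fun n => (hf measurableSet_Iio).nullMeasurableSet) hanti
      ⟨0, measure_ne_top μ _⟩
    rw [← hseq] at ht
    refine ge_of_tendsto ht (Eventually.of_forall fun n => ?_)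
    refine hnot _ ?_
    have : (0:ℝ) < 1/(n+1 : ℝ) := by positivity
    linarith

section IsoLemmas
variable {V : ℝ} {I : ℝ → ℝ}

lemma iso_nonneg (hV : 0 ≤ V) (hI0 : I 0 = 0)
    (hIpos : ∀ t : ℝ, 0 < t → t < V → 0 < I t)
    (hIsym : ∀ t ∈ Set.Icc 0 V, I (V - t) = I t) :
    ∀ t ∈ Set.Icc (0:ℝ) V, 0 ≤ I t := by
  intro t ht
  rcases eq_or_lt_of_le ht.1 with h0 | h0
  · rw [← h0, hI0]
  rcases eq_or_lt_of_le ht.2 with hV' | hV'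
  · have := hIsym 0 ⟨le_refl 0, hV⟩
    rw [sub_zero, hI0] at this
    rw [hV', this]
  · exact (hIpos t h0 hV').le

lemma iso_ratio_mono (hV : 0 < V)
    (hIconc : ConcaveOn ℝ (Set.Icc 0 V) I) (hI0 : I 0 = 0)
    (hIpos : ∀ t : ℝ, 0 < t → t < V → 0 < I t)
    {s t : ℝ} (hs : 0 < s) (hst : s ≤ t) (ht : t ≤ V / 2) :
    s / I s ≤ t / I t := by
  have htV : t < V := lt_of_le_of_lt ht (by linarith)
  have hsV : s < V := lt_of_le_of_lt (hst.trans ht) (by linarith)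
  have hIs : 0 < I s := hIpos s hs hsV
  have hIt : 0 < I t := hIpos t (lt_of_lt_of_le hs hst) htV
  have htpos : 0 < t := lt_of_lt_of_le hs hst
  -- concavity : I s ≥ (s/t) * I t
  have hconc : (s / t) * I t ≤ I s := by
    have h0mem : (0:ℝ) ∈ Set.Icc (0:ℝ) V := ⟨le_refl _, hV.le⟩
    have htmem : t ∈ Set.Icc (0:ℝ) V := ⟨htpos.le, htV.le⟩
    have ha : (0:ℝ) ≤ 1 - s / t := by
      rw [sub_nonneg]; exact div_le_one_of_le₀ hst htpos.le
    have hb : (0:ℝ) ≤ s / t := div_nonneg hs.le htpos.le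
    have hab : (1 - s / t) + s / t = 1 := by ring
    have := hIconc.2 h0mem htmem ha hb hab
    simp only [smul_eq_mul, mul_zero, hI0, mul_zero, zero_add] at this
    calc (s/t) * I t ≤ I ((s/t) * t) := this
      _ = I s := by rw [div_mul_cancel₀ _ htpos.ne']
  rw [div_le_div_iff₀ hIs hIt]
  calc s * I t = (s / t) * I t * t := by field_simp
    _ ≤ I s * t := by
        apply mul_le_mul_of_nonneg_right hconc htpos.le
    _ = t * I s := mul_comm _ _

/-- Key pointwise estimate: `min a b ≤ Φ(b) * I(a)` for `a ∈ [0, V/2]`, `b ≥ 0`. -/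
lemma min_le_phi_mul (hV : 0 < V)
    (hIconc : ConcaveOn ℝ (Set.Icc 0 V) I) (hI0 : I 0 = 0)
    (hIpos : ∀ t : ℝ, 0 < t → t < V → 0 < I t)
    (hIsym : ∀ t ∈ Set.Icc 0 V, I (V - t) = I t)
    (hImono : MonotoneOn I (Set.Ioc 0 (V / 2)))
    {a b : ℝ} (ha0 : 0 ≤ a) (ha : a ≤ V / 2) (hb : 0 ≤ b) :
    min a b ≤ PhiIso V I b * I a := by
  set b' := min b (V / 2) with hb'
  have hb'0 : 0 ≤ b' := le_min hb (by linarith)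
  have hb'V : b' ≤ V / 2 := min_le_right _ _
  rcases eq_or_lt_of_le ha0 with h0 | h0
  · -- a = 0
    rw [← h0, hI0, mul_zero]
    simp [min_le_left]
  have hIa : 0 < I a := hIpos a h0 (by linarith)
  rcases le_or_gt a b' with hcase | hcase
  · -- a ≤ b' : min a b ≤ a = (a / I a) * I a ≤ (b'/I b') * I a
    have hb'pos : 0 < b' := lt_of_lt_of_le h0 hcase
    have hratio : a / I a ≤ b' / I b' :=
      iso_ratio_mono hV hIconc hI0 hIpos h0 hcase hb'V
    calc min a b ≤ a := min_le_left _ _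
      _ = (a / I a) * I a := by field_simp
      _ ≤ (b' / I b') * I a := mul_le_mul_of_nonneg_right hratio hIa.le
      _ = PhiIso V I b * I a := rfl
  · -- b' < a ≤ V/2, so b' = b < V/2
    have hbb' : b' = b := by
      rcases le_or_gt b (V/2) with h | h
      · exact min_eq_left h
      · exfalso; rw [hb', min_eq_right h.le] at hcase; linarith
    rcases eq_or_lt_of_le hb'0 with hb0 | hb0
    · -- b' = 0
      have hb0' : b = 0 := by rw [← hbb', ← hb0]
      subst hb0'
      have hmin0 : min (0:ℝ) (V/2) = 0 := min_eq_left (by linarith)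
      rw [PhiIso, hmin0, hI0, zero_div, zero_mul]
      exact min_le_right a 0
    · have hIb : 0 < I b' := hIpos b' hb0 (by linarith)
      have hmono : I b' ≤ I a := hImono ⟨hb0, hb'V⟩ ⟨h0, ha⟩ hcase.le
      calc min a b ≤ b' := by rw [hbb']; exact min_le_right _ _
        _ = (b' / I b') * I b' := by field_simp
        _ ≤ (b' / I b') * I a := by
            apply mul_le_mul_of_nonneg_left hmono (div_nonneg hb'0 hIb.le)
        _ = PhiIso V I b * I a := rfl

lemma phi_nonneg (hV : 0 ≤ V) (hI0 : I 0 = 0)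
    (hIpos : ∀ t : ℝ, 0 < t → t < V → 0 < I t)
    (hIsym : ∀ t ∈ Set.Icc 0 V, I (V - t) = I t) {b : ℝ} (hb : 0 ≤ b) :
    0 ≤ PhiIso V I b := by
  have h1 : 0 ≤ min b (V/2) := le_min hb (by linarith)
  have h2 : min b (V/2) ≤ V := le_trans (min_le_right _ _) (by linarith)
  exact div_nonneg h1 (iso_nonneg hV hI0 hIpos hIsym _ ⟨h1, h2⟩)

end IsoLemmas

lemma lintegral_comp_neg_real (F : ℝ → ℝ≥0∞) : ∫⁻ t, F (-t) = ∫⁻ t, F t := by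
  have h := lintegral_map_equiv (μ := (volume : Measure ℝ)) F (MeasurableEquiv.neg ℝ)
  have hco : ⇑(MeasurableEquiv.neg ℝ) = fun x : ℝ => -x := rfl
  rw [hco] at h
  rw [show (Measure.map (fun x : ℝ => -x) volume) = volume from
    Measure.map_neg_eq_self (volume : Measure ℝ)] at h
  simpa using h.symm

/-- Key estimate: integral of |f - m| over A is controlled by Φ((μ A).toReal) times the
coarea bound. -/
lemma setIntegral_abs_sub_median_le
    {Ω : Type*} [MetricSpace Ω] [MeasurableSpace Ω] [BorelSpace Ω]
    (μ : Measure Ω) [IsFiniteMeasure μ] (hμ0 : μ Set.univ ≠ 0)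
    (I : ℝ → ℝ)
    (hIconc : ConcaveOn ℝ (Set.Icc 0 (μ Set.univ).toReal) I)
    (hIcont : ContinuousOn I (Set.Icc 0 (μ Set.univ).toReal))
    (hI0 : I 0 = 0)
    (hIpos : ∀ t : ℝ, 0 < t → t < (μ Set.univ).toReal → 0 < I t)
    (hIsym : ∀ t ∈ Set.Icc 0 (μ Set.univ).toReal, I ((μ Set.univ).toReal - t) = I t)
    (hImono : MonotoneOn I (Set.Ioc 0 ((μ Set.univ).toReal / 2)))
    (f : Ω → ℝ) (hf : Measurable f) (hfint : Integrable f μ)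
    (m : ℝ) (hmed : μ Set.univ / 2 ≤ μ {x | m ≤ f x} ∧ μ Set.univ / 2 ≤ μ {x | f x ≤ m})
    (A : Set Ω) (hA : MeasurableSet A)
    (G : ℝ) (hG : 0 ≤ G)
    (hcoarea : ∫⁻ s : ℝ, ENNReal.ofReal (I ((μ {x | s < f x}).toReal)) ≤ ENNReal.ofReal G) :
    ∫ x in A, |f x - m| ∂μ ≤ PhiIso (μ Set.univ).toReal I ((μ A).toReal) * G := by
  set V : ℝ := (μ Set.univ).toReal with hVdef
  have hVE : μ Set.univ ≠ ∞ := measure_ne_top μ _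
  have hV : 0 < V := ENNReal.toReal_pos hμ0 hVE
  set g : Ω → ℝ := fun x => f x - m with hgdef
  have hg : Measurable g := hf.sub measurable_const
  have hgint : Integrable g μ := hfint.sub (integrable_const m)
  set J : ℝ → ℝ := fun t => I (max 0 (min t V)) with hJdef
  have hJcont : Continuous J := by
    apply hIcont.comp_continuous (continuous_const.max (continuous_id.min continuous_const))
    intro t
    exact ⟨le_max_left _ _, max_le hV.le (le_trans (min_le_right _ _) (le_refl V))⟩
  have hJ : ∀ t ∈ Set.Icc (0:ℝ) V, J t = I t := by
    intro t ht
    simp only [hJdef]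
    rw [min_eq_left ht.2, max_eq_right ht.1]
  set Φ : ℝ := PhiIso V I ((μ A).toReal) with hΦdef
  have hΦ0 : 0 ≤ Φ := phi_nonneg hV.le hI0 hIpos hIsym ENNReal.toReal_nonneg
  -- median facts
  have hhalf : (μ Set.univ / 2).toReal = V / 2 := by
    rw [ENNReal.toReal_div]; norm_num; exact hVdef.symm
  have hpos_half : ∀ t : ℝ, 0 < t → μ {x | t < g x} ≤ μ Set.univ / 2 := by
    intro t ht
    have hsub : {x | t < g x} ⊆ {x | f x ≤ m}ᶜ := by
      intro x hx
      simp only [Set.mem_compl_iff, Set.mem_setOf_eq, not_le]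
      simp only [Set.mem_setOf_eq, hgdef] at hx
      linarith
    calc μ {x | t < g x} ≤ μ {x | f x ≤ m}ᶜ := measure_mono hsub
      _ = μ Set.univ - μ {x | f x ≤ m} :=
          measure_compl (hf measurableSet_Iic) (measure_ne_top μ _)
      _ ≤ μ Set.univ - μ Set.univ / 2 := tsub_le_tsub_left hmed.2 _
      _ = μ Set.univ / 2 := ENNReal.sub_half hVE
  have hneg_half : ∀ t : ℝ, 0 < t → μ {x | g x < -t} ≤ μ Set.univ / 2 := by
    intro t ht
    have hsub : {x | g x < -t} ⊆ {x | m ≤ f x}ᶜ := by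
      intro x hx
      simp only [Set.mem_compl_iff, Set.mem_setOf_eq, not_le]
      simp only [Set.mem_setOf_eq, hgdef] at hx
      linarith
    calc μ {x | g x < -t} ≤ μ {x | m ≤ f x}ᶜ := measure_mono hsub
      _ = μ Set.univ - μ {x | m ≤ f x} :=
          measure_compl (hf measurableSet_Ici) (measure_ne_top μ _)
      _ ≤ μ Set.univ - μ Set.univ / 2 := tsub_le_tsub_left hmed.1 _
      _ = μ Set.univ / 2 := ENNReal.sub_half hVE
  -- key pointwise bound
  have hbound : ∀ B : Set Ω, μ B ≤ μ Set.univ / 2 →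
      μ (A ∩ B) ≤ ENNReal.ofReal (Φ * J ((μ B).toReal)) := by
    intro B hB
    have ha0 : (0:ℝ) ≤ (μ B).toReal := ENNReal.toReal_nonneg
    have haV : (μ B).toReal ≤ V / 2 := by
      rw [← hhalf]
      exact ENNReal.toReal_mono (by simp [ENNReal.div_eq_top, hVE]) hB
    have hABfin : μ (A ∩ B) ≠ ∞ := measure_ne_top μ _
    have h1 : (μ (A ∩ B)).toReal ≤ min ((μ B).toReal) ((μ A).toReal) := by
      refine le_min ?_ ?_
      · exact ENNReal.toReal_mono (measure_ne_top μ _) (measure_mono Set.inter_subset_right)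
      · exact ENNReal.toReal_mono (measure_ne_top μ _) (measure_mono Set.inter_subset_left)
    have h2 : min ((μ B).toReal) ((μ A).toReal) ≤ Φ * I ((μ B).toReal) :=
      min_le_phi_mul hV hIconc hI0 hIpos hIsym hImono ha0 haV ENNReal.toReal_nonneg
    have h3 : I ((μ B).toReal) = J ((μ B).toReal) :=
      (hJ _ ⟨ha0, le_trans haV (by linarith)⟩).symm
    calc μ (A ∩ B) = ENNReal.ofReal ((μ (A ∩ B)).toReal) := (ENNReal.ofReal_toReal hABfin).symm
      _ ≤ ENNReal.ofReal (Φ * J ((μ B).toReal)) := by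
          apply ENNReal.ofReal_le_ofReal
          rw [← h3]
          exact le_trans h1 h2
  -- abbreviations
  set Fg : ℝ → ℝ≥0∞ := fun t => ENNReal.ofReal (J ((μ {x | t < g x}).toReal)) with hFgdef
  have hmeas_a : Measurable (fun t : ℝ => (μ {x | t < g x}).toReal) := by
    apply Antitone.measurable
    intro s t hst
    exact ENNReal.toReal_mono (measure_ne_top μ _)
      (measure_mono (fun x hx => lt_of_le_of_lt hst hx))
  have hFg_meas : Measurable Fg :=
    ENNReal.measurable_ofReal.comp (hJcont.measurable.comp hmeas_a)
  have hmeas_an : Measurable (fun t : ℝ => (μ {x | g x < -t}).toReal) := by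
    apply Antitone.measurable
    intro s t hst
    refine ENNReal.toReal_mono (measure_ne_top μ _) (measure_mono (fun x hx => ?_))
    simp only [Set.mem_setOf_eq] at *
    linarith
  set F₁ : ℝ → ℝ≥0∞ := fun t => ENNReal.ofReal (Φ * J ((μ {x | t < g x}).toReal)) with hF₁def
  set F₂ : ℝ → ℝ≥0∞ := fun t => ENNReal.ofReal (Φ * J ((μ {x | g x < -t}).toReal)) with hF₂def
  have hF₁meas : Measurable F₁ := ENNReal.measurable_ofReal.comp
    ((measurable_const.mul (hJcont.measurable.comp hmeas_a)))
  have hF₂meas : Measurable F₂ := ENNReal.measurable_ofReal.comp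
    ((measurable_const.mul (hJcont.measurable.comp hmeas_an)))
  have step1 : ENNReal.ofReal (∫ x in A, |g x| ∂μ) =
      ∫⁻ t in Set.Ioi (0:ℝ), (μ.restrict A) {x | t < |g x|} := by
    rw [ofReal_integral_eq_lintegral_ofReal (hgint.abs.restrict)
      (Filter.Eventually.of_forall fun x => abs_nonneg _)]
    exact lintegral_eq_lintegral_meas_lt _ (Filter.Eventually.of_forall fun x => abs_nonneg _)
      hg.abs.aemeasurable
  have step2 : ∀ t ∈ Set.Ioi (0:ℝ), (μ.restrict A) {x | t < |g x|} ≤ F₁ t + F₂ t := by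
    intro t ht
    have htpos : (0:ℝ) < t := ht
    have hms : MeasurableSet {x | t < |g x|} := measurableSet_lt measurable_const hg.abs
    rw [Measure.restrict_apply hms]
    have hsub : {x | t < |g x|} ∩ A ⊆ (A ∩ {x | t < g x}) ∪ (A ∩ {x | g x < -t}) := by
      intro x hx
      obtain ⟨hx1, hx2⟩ := hx
      simp only [Set.mem_setOf_eq] at hx1
      rcases lt_abs.mp hx1 with h | h
      · exact Or.inl ⟨hx2, h⟩
      · exact Or.inr ⟨hx2, by simpa only [Set.mem_setOf_eq, lt_neg] using h⟩
    calc μ ({x | t < |g x|} ∩ A) ≤ μ ((A ∩ {x | t < g x}) ∪ (A ∩ {x | g x < -t})) :=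
          measure_mono hsub
      _ ≤ μ (A ∩ {x | t < g x}) + μ (A ∩ {x | g x < -t}) := measure_union_le _ _
      _ ≤ F₁ t + F₂ t :=
          add_le_add (hbound _ (hpos_half t htpos)) (hbound _ (hneg_half t htpos))
  have step3 : ∫⁻ t in Set.Ioi (0:ℝ), (μ.restrict A) {x | t < |g x|} ≤
      ∫⁻ t in Set.Ioi (0:ℝ), (F₁ t + F₂ t) :=
    setLIntegral_mono (hF₁meas.add hF₂meas) step2
  have step4 : ∫⁻ t in Set.Ioi (0:ℝ), (F₁ t + F₂ t) =
      (∫⁻ t in Set.Ioi (0:ℝ), F₁ t) + ∫⁻ t in Set.Ioi (0:ℝ), F₂ t :=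
    lintegral_add_left hF₁meas _
  have hF1eq : ∫⁻ t in Set.Ioi (0:ℝ), F₁ t =
      ENNReal.ofReal Φ * ∫⁻ t in Set.Ioi (0:ℝ), Fg t := by
    rw [← lintegral_const_mul' _ _ ENNReal.ofReal_ne_top]
    refine lintegral_congr fun t => ?_
    show ENNReal.ofReal (Φ * J ((μ {x | t < g x}).toReal)) =
      ENNReal.ofReal Φ * ENNReal.ofReal (J ((μ {x | t < g x}).toReal))
    exact ENNReal.ofReal_mul hΦ0
  have hF2eq : ∫⁻ t in Set.Ioi (0:ℝ), F₂ t =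
      ENNReal.ofReal Φ * ∫⁻ t in Set.Ioi (0:ℝ),
        ENNReal.ofReal (J ((μ {x | g x < -t}).toReal)) := by
    rw [← lintegral_const_mul' _ _ ENNReal.ofReal_ne_top]
    refine lintegral_congr fun t => ?_
    show ENNReal.ofReal (Φ * J ((μ {x | g x < -t}).toReal)) =
      ENNReal.ofReal Φ * ENNReal.ofReal (J ((μ {x | g x < -t}).toReal))
    exact ENNReal.ofReal_mul hΦ0
  -- a.e. rewrite of the negative part
  have hcount : Set.Countable {t : ℝ | μ {x | g x = t} ≠ 0} := by
    have := Measure.countable_meas_level_set_pos (μ := μ) hg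
    refine this.mono fun t ht => ?_
    simpa [pos_iff_ne_zero] using ht
  have hcount2 : Set.Countable {t : ℝ | μ {x | g x = -t} ≠ 0} := by
    have : {t : ℝ | μ {x | g x = -t} ≠ 0} = Neg.neg ⁻¹' {t : ℝ | μ {x | g x = t} ≠ 0} := rfl
    rw [this]
    exact hcount.preimage neg_injective
  have hE0 : volume {t : ℝ | μ {x | g x = -t} ≠ 0} = 0 := hcount2.measure_zero _
  have hae : ∀ᵐ t ∂(volume.restrict (Set.Ioi (0:ℝ))),
      ENNReal.ofReal (J ((μ {x | g x < -t}).toReal)) = Fg (-t) := by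
    refine ae_restrict_of_ae ?_
    rw [ae_iff]
    refine measure_mono_null (fun t ht => ?_) hE0
    simp only [Set.mem_setOf_eq] at ht ⊢
    intro hzero
    apply ht
    -- if μ {g = -t} = 0 then the two expressions agree
    have hle : μ {x | g x < -t} ≤ μ Set.univ := measure_mono (Set.subset_univ _)
    have hcompl : {x | g x < -t} = {x | -t ≤ g x}ᶜ := by
      ext x; simp only [Set.mem_compl_iff, Set.mem_setOf_eq, not_le]
    have h1 : μ {x | g x < -t} = μ Set.univ - μ {x | -t ≤ g x} := by
      rw [hcompl, measure_compl (s := {x | -t ≤ g x}) (hg measurableSet_Ici)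
        (measure_ne_top μ _)]
    have heq : μ {x | -t ≤ g x} = μ {x | -t < g x} := by
      have hsub : {x | -t ≤ g x} ⊆ {x | -t < g x} ∪ {x | g x = -t} := by
        intro x hx
        have hx' : -t ≤ g x := hx
        rcases lt_or_eq_of_le hx' with h | h
        · exact Or.inl h
        · exact Or.inr h.symm
      refine le_antisymm ?_ (measure_mono fun x hx => ?_)
      swap
      · have hx' : -t < g x := hx
        exact le_of_lt hx'
      calc μ {x | -t ≤ g x} ≤ μ ({x | -t < g x} ∪ {x | g x = -t}) := measure_mono hsub
        _ ≤ μ {x | -t < g x} + μ {x | g x = -t} := measure_union_le _ _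
        _ = μ {x | -t < g x} := by rw [hzero, add_zero]
    have hu0 : (0:ℝ) ≤ (μ {x | -t ≤ g x}).toReal := ENNReal.toReal_nonneg
    have huV : (μ {x | -t ≤ g x}).toReal ≤ V :=
      ENNReal.toReal_mono hVE (measure_mono (Set.subset_univ _))
    have h2 : (μ {x | g x < -t}).toReal = V - (μ {x | -t ≤ g x}).toReal := by
      rw [h1, ENNReal.toReal_sub_of_le (measure_mono (Set.subset_univ _)) hVE]
    rw [h2]
    have h3 : J (V - (μ {x | -t ≤ g x}).toReal) = I (V - (μ {x | -t ≤ g x}).toReal) :=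
      hJ _ ⟨by linarith, by linarith⟩
    have h4 : I (V - (μ {x | -t ≤ g x}).toReal) = I ((μ {x | -t ≤ g x}).toReal) :=
      hIsym _ ⟨hu0, huV⟩
    have h5 : J ((μ {x | -t ≤ g x}).toReal) = I ((μ {x | -t ≤ g x}).toReal) :=
      hJ _ ⟨hu0, huV⟩
    rw [h3, h4, ← h5, heq]
  have hneg_cv : ∫⁻ t in Set.Ioi (0:ℝ), Fg (-t) = ∫⁻ t in Set.Iio (0:ℝ), Fg t := by
    rw [← lintegral_indicator measurableSet_Ioi, ← lintegral_indicator measurableSet_Iio]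
    rw [← lintegral_comp_neg_real (F := (Set.Ioi (0:ℝ)).indicator fun t => Fg (-t))]
    refine lintegral_congr fun t => ?_
    by_cases h : t < 0
    · rw [Set.indicator_of_mem (by simpa using h : -t ∈ Set.Ioi (0:ℝ)),
        Set.indicator_of_mem (by simpa using h : t ∈ Set.Iio (0:ℝ)), neg_neg]
    · rw [Set.indicator_of_notMem (by simpa using h : ¬ -t ∈ Set.Ioi (0:ℝ)),
        Set.indicator_of_notMem (by simpa using h : ¬ t ∈ Set.Iio (0:ℝ))]
  have hsum : (∫⁻ t in Set.Ioi (0:ℝ), Fg t) + (∫⁻ t in Set.Iio (0:ℝ), Fg t) ≤ ∫⁻ t, Fg t := by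
    rw [← lintegral_union measurableSet_Iio
      (by rw [Set.disjoint_left]; intro t ht ht'; exact absurd (lt_trans (show t < 0 from ht') (show (0:ℝ) < t from ht)) (lt_irrefl _))]
    exact setLIntegral_le_lintegral _ _
  have htrans : ∫⁻ t, Fg t = ∫⁻ t : ℝ, ENNReal.ofReal (I ((μ {x | t < f x}).toReal)) := by
    have hset : ∀ t : ℝ, {x | t < g x} = {x | t + m < f x} := by
      intro t
      ext x
      simp only [Set.mem_setOf_eq, hgdef]
      constructor <;> intro h <;> linarith
    have harg : ∀ t : ℝ, Fg t =
        (fun s : ℝ => ENNReal.ofReal (J ((μ {x | s < f x}).toReal))) (t + m) := by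
      intro t
      simp only [hFgdef, hset t]
    calc ∫⁻ t, Fg t
        = ∫⁻ t : ℝ, (fun s : ℝ => ENNReal.ofReal (J ((μ {x | s < f x}).toReal))) (t + m) :=
          lintegral_congr harg
      _ = ∫⁻ t : ℝ, ENNReal.ofReal (J ((μ {x | t < f x}).toReal)) :=
          lintegral_add_right_eq_self (μ := (volume : Measure ℝ))
            (fun s : ℝ => ENNReal.ofReal (J ((μ {x | s < f x}).toReal))) m
      _ = ∫⁻ t : ℝ, ENNReal.ofReal (I ((μ {x | t < f x}).toReal)) := by
          refine lintegral_congr fun t => ?_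
          rw [hJ _ ⟨ENNReal.toReal_nonneg, ENNReal.toReal_mono hVE
            (measure_mono (Set.subset_univ _))⟩]
  -- assemble
  have main : ENNReal.ofReal (∫ x in A, |g x| ∂μ) ≤ ENNReal.ofReal (Φ * G) := by
    calc ENNReal.ofReal (∫ x in A, |g x| ∂μ)
        = ∫⁻ t in Set.Ioi (0:ℝ), (μ.restrict A) {x | t < |g x|} := step1
      _ ≤ ∫⁻ t in Set.Ioi (0:ℝ), (F₁ t + F₂ t) := step3
      _ = (∫⁻ t in Set.Ioi (0:ℝ), F₁ t) + ∫⁻ t in Set.Ioi (0:ℝ), F₂ t := step4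
      _ = ENNReal.ofReal Φ * (∫⁻ t in Set.Ioi (0:ℝ), Fg t) +
          ENNReal.ofReal Φ * ∫⁻ t in Set.Ioi (0:ℝ),
            ENNReal.ofReal (J ((μ {x | g x < -t}).toReal)) := by rw [hF1eq, hF2eq]
      _ = ENNReal.ofReal Φ * ((∫⁻ t in Set.Ioi (0:ℝ), Fg t) +
            (∫⁻ t in Set.Iio (0:ℝ), Fg t)) := by
          rw [← mul_add]
          congr 2
          rw [lintegral_congr_ae hae, hneg_cv]
      _ ≤ ENNReal.ofReal Φ * ∫⁻ t, Fg t := by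
          exact mul_le_mul_right hsum _
      _ = ENNReal.ofReal Φ * ∫⁻ t : ℝ, ENNReal.ofReal (I ((μ {x | t < f x}).toReal)) := by
          rw [htrans]
      _ ≤ ENNReal.ofReal Φ * ENNReal.ofReal G := mul_le_mul_right hcoarea _
      _ = ENNReal.ofReal (Φ * G) := (ENNReal.ofReal_mul hΦ0).symm
  exact (ENNReal.ofReal_le_ofReal_iff (mul_nonneg hΦ0 hG)).mp main

/-- **L¹ uncertainty, finite measure, mean zero.**
If `w` is an isoperimetric weight with constant `C`, `α > 0` and `f` is Lipschitz,
integrable, with `|∇f|` and `w^α f` integrable, `∫ f dμ = 0`, and `f` satisfies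
the co-area inequality, then for every `r > 0`,
`∫|f| dμ ≤ 2 C r ∫|∇f| dμ + 2 r^{-α} ∫ w^α |f| dμ`. -/
theorem l1_uncertainty_mean_zero {Ω : Type*} [MetricSpace Ω] [MeasurableSpace Ω]
    [BorelSpace Ω] (μ : Measure Ω) [IsFiniteMeasure μ] [IsFiniteMeasureOnCompacts μ]
    (I : ℝ → ℝ)
    (hIprof : ∀ t : ℝ, 0 ≤ t → ENNReal.ofReal t < μ Set.univ →
      ENNReal.ofReal (I t) = isoProfile μ (ENNReal.ofReal t))
    (hIconc : ConcaveOn ℝ (Set.Icc 0 (μ Set.univ).toReal) I)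
    (hIcont : ContinuousOn I (Set.Icc 0 (μ Set.univ).toReal))
    (hI0 : I 0 = 0)
    (hIpos : ∀ t : ℝ, 0 < t → t < (μ Set.univ).toReal → 0 < I t)
    (hIsym : ∀ t ∈ Set.Icc 0 (μ Set.univ).toReal, I ((μ Set.univ).toReal - t) = I t)
    (hImono : MonotoneOn I (Set.Ioc 0 ((μ Set.univ).toReal / 2)))
    (w : Ω → ℝ) (hw_meas : Measurable w) (hw_pos : ∀ x, 0 < w x)
    (C : ℝ)
    (hC : ∀ r : ℝ, 0 < r →
      PhiIso (μ Set.univ).toReal I ((μ {x | w x ≤ r}).toReal) ≤ C * r)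
    (α : ℝ) (hα : 0 < α)
    (K : ℝ≥0) (f : Ω → ℝ) (hlip : LipschitzWith K f)
    (hfint : Integrable f μ) (hgint : Integrable (gradMod f) μ)
    (hwfint : Integrable (fun x => w x ^ α * f x) μ)
    (hmean : ∫ x, f x ∂μ = 0)
    (hcoarea : ∫⁻ s : ℝ, ENNReal.ofReal (I ((μ {x | s < f x}).toReal)) ≤
      ENNReal.ofReal (∫ x, gradMod f x ∂μ)) :
    ∀ r : ℝ, 0 < r →
      ∫ x, |f x| ∂μ ≤
        2 * C * r * ∫ x, gradMod f x ∂μ + 2 * r ^ (-α) * ∫ x, w x ^ α * |f x| ∂μ := by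
  intro r hr
  by_cases hμ0 : μ Set.univ = 0
  · have hz : μ = 0 := Measure.measure_univ_eq_zero.mp hμ0
    rw [hz]
    simp
  -- nontrivial case
  have hVE : μ Set.univ ≠ ∞ := measure_ne_top μ _
  have hf_meas : Measurable f := hlip.continuous.measurable
  obtain ⟨m, hmed⟩ := exists_isMedian μ hμ0 hf_meas
  set G : ℝ := ∫ x, gradMod f x ∂μ with hGdef
  have hG0 : 0 ≤ G := integral_nonneg fun x => gradMod_nonneg hlip x
  set A : Set Ω := {x | w x ≤ r} with hAdef
  have hA : MeasurableSet A := hw_meas measurableSet_Iic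
  -- key estimate on A
  have hkey : ∫ x in A, |f x - m| ∂μ ≤ C * r * G := by
    have h1 := setIntegral_abs_sub_median_le μ hμ0 I hIconc hIcont hI0 hIpos hIsym hImono
      f hf_meas hfint m hmed A hA G hG0 hcoarea
    calc ∫ x in A, |f x - m| ∂μ
        ≤ PhiIso (μ Set.univ).toReal I ((μ A).toReal) * G := h1
      _ ≤ (C * r) * G := mul_le_mul_of_nonneg_right (hC r hr) hG0
  -- integrability of w^α |f|
  have habs : Integrable (fun x => w x ^ α * |f x|) μ := by
    have h := hwfint.abs
    refine h.congr (Filter.Eventually.of_forall fun x => ?_)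
    show |w x ^ α * f x| = w x ^ α * |f x|
    rw [abs_mul, abs_of_nonneg (Real.rpow_nonneg (hw_pos x).le α)]
  set T : ℝ := ∫ x, w x ^ α * |f x| ∂μ with hTdef
  have hT_nn : 0 ≤ᵐ[μ] fun x => w x ^ α * |f x| :=
    Filter.Eventually.of_forall fun x =>
      mul_nonneg (Real.rpow_nonneg (hw_pos x).le α) (abs_nonneg _)
  have hrα : 0 < r ^ (-α) := Real.rpow_pos_of_pos hr _
  -- complement bound
  have hcompl_bound : ∫ x in Aᶜ, |f x| ∂μ ≤ r ^ (-α) * T := by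
    have hpt : ∀ x ∈ Aᶜ, |f x| ≤ r ^ (-α) * (w x ^ α * |f x|) := by
      intro x hx
      have hwx : r < w x := not_le.mp hx
      have h1 : r ^ α ≤ w x ^ α := Real.rpow_le_rpow hr.le hwx.le hα.le
      have h2 : (1:ℝ) ≤ r ^ (-α) * w x ^ α := by
        rw [Real.rpow_neg hr.le]
        rw [inv_mul_eq_div, le_div_iff₀ (Real.rpow_pos_of_pos hr α), one_mul]
        exact h1
      calc |f x| = 1 * |f x| := (one_mul _).symm
        _ ≤ (r ^ (-α) * w x ^ α) * |f x| :=
            mul_le_mul_of_nonneg_right h2 (abs_nonneg _)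
        _ = r ^ (-α) * (w x ^ α * |f x|) := by ring
    calc ∫ x in Aᶜ, |f x| ∂μ
        ≤ ∫ x in Aᶜ, r ^ (-α) * (w x ^ α * |f x|) ∂μ := by
          refine setIntegral_mono_on (hfint.abs.integrableOn)
            ((habs.const_mul _).integrableOn) hA.compl hpt
      _ = r ^ (-α) * ∫ x in Aᶜ, w x ^ α * |f x| ∂μ := integral_const_mul _ _
      _ ≤ r ^ (-α) * T := by
          refine mul_le_mul_of_nonneg_left ?_ hrα.le
          exact setIntegral_le_integral habs hT_nn
  -- decomposition of μ univ
  have hVsum : ((μ Set.univ).toReal) = (μ A).toReal + (μ Aᶜ).toReal := by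
    rw [← ENNReal.toReal_add (measure_ne_top μ _) (measure_ne_top μ _),
      measure_add_measure_compl hA]
  have hgabs : Integrable (fun x => |f x - m|) μ := (hfint.sub (integrable_const m)).abs
  -- median size bound
  have hm_bound : |m| * (μ A).toReal ≤ C * r * G + r ^ (-α) * T := by
    have hig : ∫ x, (f x - m) ∂μ = -((μ Set.univ).toReal * m) := by
      rw [integral_sub hfint (integrable_const m), hmean, integral_const, smul_eq_mul, measureReal_def]
      ring
    have h2 : |m| * (μ Set.univ).toReal ≤ ∫ x, |f x - m| ∂μ := by
      have := norm_integral_le_integral_norm (μ := μ) (f := fun x => f x - m)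
      simp only [Real.norm_eq_abs, hig, abs_neg, abs_mul] at this
      rw [abs_of_nonneg ENNReal.toReal_nonneg] at this
      calc |m| * (μ Set.univ).toReal = (μ Set.univ).toReal * |m| := mul_comm _ _
        _ ≤ ∫ x, |f x - m| ∂μ := this
    have h3 : ∫ x, |f x - m| ∂μ = (∫ x in A, |f x - m| ∂μ) + ∫ x in Aᶜ, |f x - m| ∂μ :=
      (integral_add_compl hA hgabs).symm
    have h4 : ∫ x in Aᶜ, |f x - m| ∂μ ≤ (∫ x in Aᶜ, |f x| ∂μ) + |m| * (μ Aᶜ).toReal := by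
      calc ∫ x in Aᶜ, |f x - m| ∂μ
          ≤ ∫ x in Aᶜ, (|f x| + |m|) ∂μ := by
            refine setIntegral_mono_on hgabs.integrableOn
              (hfint.abs.integrableOn.add (integrableOn_const (measure_ne_top μ _))) hA.compl (fun x _ => ?_)
            calc |f x - m| = |f x + -m| := by ring_nf
              _ ≤ |f x| + |-m| := abs_add_le _ _
              _ = |f x| + |m| := by rw [abs_neg]
        _ = (∫ x in Aᶜ, |f x| ∂μ) + |m| * (μ Aᶜ).toReal := by
            rw [integral_add hfint.abs.integrableOn (integrableOn_const (measure_ne_top μ _)), setIntegral_const, smul_eq_mul, measureReal_def, mul_comm]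
    have hprod : |m| * (μ Set.univ).toReal =
        |m| * (μ A).toReal + |m| * (μ Aᶜ).toReal := by rw [hVsum]; ring
    linarith [hkey, hcompl_bound]
  -- bound on A for f
  have hA_f : ∫ x in A, |f x| ∂μ ≤ (∫ x in A, |f x - m| ∂μ) + |m| * (μ A).toReal := by
    calc ∫ x in A, |f x| ∂μ
        ≤ ∫ x in A, (|f x - m| + |m|) ∂μ := by
          refine setIntegral_mono_on hfint.abs.integrableOn
            (hgabs.integrableOn.add (integrableOn_const (measure_ne_top μ _))) hA (fun x _ => ?_)
          calc |f x| = |(f x - m) + m| := by ring_nf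
            _ ≤ |f x - m| + |m| := abs_add_le _ _
      _ = (∫ x in A, |f x - m| ∂μ) + |m| * (μ A).toReal := by
          rw [integral_add hgabs.integrableOn (integrableOn_const (measure_ne_top μ _)), setIntegral_const, smul_eq_mul, measureReal_def, mul_comm]
  have hsplit : ∫ x, |f x| ∂μ = (∫ x in A, |f x| ∂μ) + ∫ x in Aᶜ, |f x| ∂μ :=
    (integral_add_compl hA hfint.abs).symm
  linarith [hkey, hcompl_bound, hm_bound, hA_f, hsplit]
end

section
/- (L¹ uncertainty, infinite measure.) Let (Ω,d,μ) be a metric measure space with μ(Ω) = ∞ whose isoperimetric profile I is concave, continuous, increasing, I(0) = 0, and strictly positive on (0,∞). Let w : Ω → (0,∞) be an isoperimetric weight with constant C(w) = sup_{r>0} μ{w ≤ r}/(r·I(μ{w ≤ r})) < ∞, and let α > 0. Let f : Ω → ℝ be Lipschitz with compact support, with |∇f| and w^α f integrable, and assume the co-area inequality ∫_0^{∞} I(μ{|f| > s}) ds ≤ ∫_Ω |∇f| dμ. Then for every r > 0, ∫_Ω |f| dμ ≤ 2 C(w) r ∫_Ω |∇f| dμ + 2 r^{−α} ∫_Ω w^α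 |f| dμ. -/
open MeasureTheory Filter Set Topology
open scoped ENNReal NNReal

/-- **L¹ uncertainty, infinite measure.**
On a metric measure space with `μ(Ω) = ∞` whose isoperimetric profile `I` is concave,
continuous, increasing, zero at zero and positive on `(0,∞)`, if `w` is an isoperimetric
weight with constant `C` (i.e. `μ{w ≤ r} ≤ C r I(μ{w ≤ r})` for all `r > 0`), `α > 0`,
and `f` is Lipschitz with compact support, `|∇f|` and `w^α f` integrable, satisfying the
co-area inequality, then for every `r > 0`,
`∫|f| dμ ≤ 2 C r ∫|∇f| dμ + 2 r^{-α} ∫ w^α |f| dμ`. -/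
theorem l1_uncertainty_infinite {Ω : Type*} [MetricSpace Ω] [MeasurableSpace Ω]
    [BorelSpace Ω] (μ : Measure Ω) [IsFiniteMeasureOnCompacts μ]
    (hμ : μ Set.univ = ⊤)
    (I : ℝ → ℝ)
    (hIprof : ∀ t : ℝ, 0 ≤ t →
      ENNReal.ofReal (I t) = isoProfile μ (ENNReal.ofReal t))
    (hIconc : ConcaveOn ℝ (Set.Ici 0) I)
    (hIcont : ContinuousOn I (Set.Ici 0))
    (hImono : MonotoneOn I (Set.Ici 0))
    (hI0 : I 0 = 0)
    (hIpos : ∀ t : ℝ, 0 < t → 0 < I t)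
    (w : Ω → ℝ) (hw_meas : Measurable w) (hw_pos : ∀ x, 0 < w x)
    (C : ℝ)
    (hC : ∀ r : ℝ, 0 < r →
      μ {x | w x ≤ r} ≤ ENNReal.ofReal (C * r * I ((μ {x | w x ≤ r}).toReal)))
    (α : ℝ) (hα : 0 < α)
    (K : ℝ≥0) (f : Ω → ℝ) (hlip : LipschitzWith K f) (hsupp : HasCompactSupport f)
    (hgint : Integrable (gradMod f) μ)
    (hwfint : Integrable (fun x => w x ^ α * f x) μ)
    (hcoarea : ∫⁻ s in Set.Ioi (0:ℝ), ENNReal.ofReal (I ((μ {x | s < |f x|}).toReal)) ≤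
      ENNReal.ofReal (∫ x, gradMod f x ∂μ)) :
    ∀ r : ℝ, 0 < r →
      ∫ x, |f x| ∂μ ≤
        2 * C * r * ∫ x, gradMod f x ∂μ + 2 * r ^ (-α) * ∫ x, w x ^ α * |f x| ∂μ := by
  intro r hr
  have hInonneg : ∀ t : ℝ, 0 ≤ t → 0 ≤ I t := by
    intro t ht
    rcases ht.lt_or_eq with h | h
    · exact (hIpos t h).le
    · rw [← h, hI0]
  have hGnn : 0 ≤ ∫ x, gradMod f x ∂μ := integral_nonneg fun x => gradMod_nonneg hlip x
  -- C is positive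
  have hCpos : 0 < C := by
    by_contra hCle
    push_neg at hCle
    have hall : ∀ n : ℕ, μ {x | w x ≤ (n : ℝ) + 1} = 0 := by
      intro n
      have h := hC ((n : ℝ) + 1) (by positivity)
      have h1 : C * ((n : ℝ) + 1) ≤ 0 :=
        mul_nonpos_iff.2 (Or.inr ⟨hCle, by positivity⟩)
      have h2 : C * ((n : ℝ) + 1) * I ((μ {x | w x ≤ (n : ℝ) + 1}).toReal) ≤ 0 :=
        mul_nonpos_iff.2 (Or.inr ⟨h1, hInonneg _ ENNReal.toReal_nonneg⟩)
      have h3 : ENNReal.ofReal (C * ((n : ℝ) + 1) * I ((μ {x | w x ≤ (n : ℝ) + 1}).toReal)) = 0 :=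
        ENNReal.ofReal_eq_zero.2 h2
      rw [h3] at h
      exact le_antisymm h zero_le
    have huniv : (Set.univ : Set Ω) = ⋃ n : ℕ, {x | w x ≤ (n : ℝ) + 1} := by
      ext x
      simp only [mem_univ, mem_iUnion, mem_setOf_eq, true_iff]
      exact ⟨⌈w x⌉₊, (Nat.le_ceil (w x)).trans (by linarith)⟩
    have : μ Set.univ = 0 := by
      rw [huniv]
      refine le_antisymm ((measure_iUnion_le _).trans ?_) zero_le
      simp [hall]
    rw [hμ] at this
    exact ENNReal.top_ne_zero this
  have hCr : (0:ℝ) ≤ C * r := by positivity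
  -- the set {w ≤ r} has finite measure
  have hMne : μ {x | w x ≤ r} ≠ ⊤ := by
    intro h
    have h2 := hC r hr
    rw [h] at h2
    exact ENNReal.ofReal_ne_top (top_le_iff.1 h2)
  set m := (μ {x | w x ≤ r}).toReal with hm_def
  have hm0 : (0:ℝ) ≤ m := ENNReal.toReal_nonneg
  have hmB : m ≤ C * r * I m := by
    have h := hC r hr
    have h2 : m ≤ max (C * r * I m) 0 := by
      have h3 := ENNReal.toReal_mono (ENNReal.ofReal_ne_top) h
      rwa [ENNReal.toReal_ofReal'] at h3
    rcases le_total (C * r * I m) 0 with hy | hy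
    · have hm0' : m = 0 := le_antisymm (by rwa [max_eq_right hy] at h2) hm0
      simp [hm0', hI0]
    · rwa [max_eq_left hy] at h2
  -- key inequality: t ≤ C r I(t) for all 0 ≤ t ≤ m
  have key : ∀ t : ℝ, 0 ≤ t → t ≤ m → t ≤ C * r * I t := by
    intro t ht htm
    rcases hm0.lt_or_eq with hm | hm
    · have hIm := hIpos m hm
      have hm' : m ≠ 0 := ne_of_gt hm
      have hb : 0 ≤ t / m := div_nonneg ht hm.le
      have ha : 0 ≤ 1 - t / m := by
        rw [sub_nonneg]
        exact (div_le_one hm).2 htm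
      have hconc := hIconc.2 (mem_Ici.2 le_rfl) (mem_Ici.2 hm.le) ha hb (by ring)
      simp only [smul_eq_mul] at hconc
      rw [hI0] at hconc
      have harg : (1 - t / m) * 0 + (t / m) * m = t := by field_simp; ring
      rw [harg] at hconc
      have h2 : t * I m ≤ m * I t := by
        have h3 := mul_le_mul_of_nonneg_left hconc hm.le
        have h4 : m * ((1 - t / m) * 0 + t / m * I m) = t * I m := by
          field_simp
          try ring
        linarith [h3, h4.symm.le, h4.le]
      have h4 : t * I m ≤ (C * r * I t) * I m := by
        have h5 := mul_le_mul_of_nonneg_right hmB (hInonneg t ht)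
        nlinarith [hInonneg t ht]
      exact le_of_mul_le_mul_right h4 hIm
    · have ht0 : t = 0 := le_antisymm (hm ▸ htm) ht
      simp [ht0, hI0]
  -- finiteness of superlevel sets
  have hts : μ (tsupport f) ≠ ⊤ := hsupp.measure_lt_top.ne
  have hTfin : ∀ s : ℝ, 0 < s → μ {x | s < |f x|} ≠ ⊤ := by
    intro s hs
    refine ne_top_of_le_ne_top hts (measure_mono ?_)
    intro x hx
    simp only [mem_setOf_eq] at hx
    refine subset_tsupport f ?_
    rw [Function.mem_support]
    intro h0
    rw [h0, abs_zero] at hx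
    linarith
  -- measurability
  have hfm : Measurable f := hlip.continuous.measurable
  have hmeasT : ∀ s : ℝ, MeasurableSet {x : Ω | s < |f x|} :=
    fun s => measurableSet_lt measurable_const hfm.abs
  have hwgt : MeasurableSet {x : Ω | r < w x} := measurableSet_lt measurable_const hw_meas
  have hBanti : Antitone (fun s : ℝ => μ ({x | s < |f x|} ∩ {x | r < w x})) := by
    intro s s' h
    exact measure_mono (inter_subset_inter_left _ (fun x hx => lt_of_le_of_lt h hx))
  have hBmeas : Measurable (fun s : ℝ => μ ({x | s < |f x|} ∩ {x | r < w x})) :=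
    hBanti.measurable
  -- pointwise bound
  have hpt : ∀ s ∈ Ioi (0:ℝ), μ {x | s < |f x|} ≤
      ENNReal.ofReal (C * r * I ((μ {x | s < |f x|}).toReal)) +
        μ ({x | s < |f x|} ∩ {x | r < w x}) := by
    intro s hs
    have hsplit : {x : Ω | s < |f x|} ⊆
        ({x | s < |f x|} ∩ {x | w x ≤ r}) ∪ ({x | s < |f x|} ∩ {x | r < w x}) := by
      intro x hx
      rcases le_or_gt (w x) r with h | h
      · exact Or.inl ⟨hx, h⟩
      · exact Or.inr ⟨hx, h⟩
    refine (measure_mono hsplit).trans ((measure_union_le _ _).trans ?_)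
    refine add_le_add ?_ le_rfl
    have hAle : μ ({x | s < |f x|} ∩ {x | w x ≤ r}) ≤ μ {x | w x ≤ r} :=
      measure_mono inter_subset_right
    have hAfin : μ ({x | s < |f x|} ∩ {x | w x ≤ r}) ≠ ⊤ := ne_top_of_le_ne_top hMne hAle
    have ht1 : (μ ({x | s < |f x|} ∩ {x | w x ≤ r})).toReal ≤ m :=
      ENNReal.toReal_mono hMne hAle
    have hkey := key _ ENNReal.toReal_nonneg ht1
    have ht2 : (μ ({x | s < |f x|} ∩ {x | w x ≤ r})).toReal ≤ (μ {x | s < |f x|}).toReal :=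
      ENNReal.toReal_mono (hTfin s hs) (measure_mono inter_subset_left)
    have hmono := hImono (mem_Ici.2 ENNReal.toReal_nonneg) (mem_Ici.2 ENNReal.toReal_nonneg) ht2
    have hfinal : (μ ({x | s < |f x|} ∩ {x | w x ≤ r})).toReal ≤
        C * r * I ((μ {x | s < |f x|}).toReal) := by
      refine hkey.trans ?_
      have := mul_le_mul_of_nonneg_left hmono hCr
      linarith
    calc μ ({x | s < |f x|} ∩ {x | w x ≤ r})
        = ENNReal.ofReal ((μ ({x | s < |f x|} ∩ {x | w x ≤ r})).toReal) :=
          (ENNReal.ofReal_toReal hAfin).symm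
      _ ≤ ENNReal.ofReal (C * r * I ((μ {x | s < |f x|}).toReal)) :=
          ENNReal.ofReal_le_ofReal hfinal
  -- integrability facts
  have hfint : Integrable f μ := hlip.continuous.integrable_of_hasCompactSupport hsupp
  have habs : Integrable (fun x => |f x|) μ := hfint.abs
  have hwa_nn : ∀ x, (0:ℝ) ≤ w x ^ α := fun x => Real.rpow_nonneg (hw_pos x).le α
  have hwfabs : Integrable (fun x => w x ^ α * |f x|) μ := by
    refine hwfint.abs.congr (ae_of_all _ fun x => ?_)
    simp only [abs_mul, abs_of_nonneg (hwa_nn x)]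
  have hWnn : 0 ≤ ∫ x, w x ^ α * |f x| ∂μ :=
    integral_nonneg fun x => mul_nonneg (hwa_nn x) (abs_nonneg _)
  have hrna : (0:ℝ) ≤ r ^ (-α) := Real.rpow_nonneg hr.le _
  -- layer cake
  have lc : ∫⁻ x, ENNReal.ofReal |f x| ∂μ = ∫⁻ s in Ioi (0:ℝ), μ {x | s < |f x|} :=
    lintegral_eq_lintegral_meas_lt μ (ae_of_all _ fun x => abs_nonneg _) hfm.abs.aemeasurable
  -- part A
  have part1a : ∫⁻ s in Ioi (0:ℝ), ENNReal.ofReal (C * r * I ((μ {x | s < |f x|}).toReal)) ≤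
      ENNReal.ofReal (C * r) * ENNReal.ofReal (∫ x, gradMod f x ∂μ) := by
    simp_rw [ENNReal.ofReal_mul hCr]
    rw [lintegral_const_mul' _ _ ENNReal.ofReal_ne_top]
    exact mul_le_mul_right hcoarea _
  -- part B
  have partB : ∫⁻ s in Ioi (0:ℝ), μ ({x | s < |f x|} ∩ {x | r < w x}) ≤
      ENNReal.ofReal (r ^ (-α)) * ENNReal.ofReal (∫ x, w x ^ α * |f x| ∂μ) := by
    have hres : ∀ s : ℝ, μ ({x | s < |f x|} ∩ {x | r < w x}) =
        (μ.restrict {x | r < w x}) {x | s < |f x|} := by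
      intro s
      rw [Measure.restrict_apply (hmeasT s)]
    simp_rw [hres]
    rw [← lintegral_eq_lintegral_meas_lt (μ.restrict {x | r < w x})
      (ae_of_all _ fun x => abs_nonneg _) hfm.abs.aemeasurable]
    have step : ∫⁻ x in {x | r < w x}, ENNReal.ofReal |f x| ∂μ ≤
        ∫⁻ x in {x | r < w x}, ENNReal.ofReal (r ^ (-α) * (w x ^ α * |f x|)) ∂μ := by
      refine setLIntegral_mono' hwgt fun x hx => ?_
      refine ENNReal.ofReal_le_ofReal ?_
      have hwge : r ^ α ≤ w x ^ α := Real.rpow_le_rpow hr.le (le_of_lt hx) hα.le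
      have hrp : (0:ℝ) < r ^ α := Real.rpow_pos_of_pos hr α
      have h1 : (1:ℝ) ≤ r ^ (-α) * w x ^ α := by
        rw [Real.rpow_neg hr.le, inv_mul_eq_div, le_div_iff₀ hrp]
        linarith
      calc |f x| = 1 * |f x| := (one_mul _).symm
        _ ≤ (r ^ (-α) * w x ^ α) * |f x| := mul_le_mul_of_nonneg_right h1 (abs_nonneg _)
        _ = r ^ (-α) * (w x ^ α * |f x|) := by ring
    refine step.trans ((setLIntegral_le_lintegral _ _).trans ?_)
    simp_rw [ENNReal.ofReal_mul hrna]
    rw [lintegral_const_mul' _ _ ENNReal.ofReal_ne_top,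
      ← ofReal_integral_eq_lintegral_ofReal hwfabs
        (ae_of_all _ fun x => mul_nonneg (hwa_nn x) (abs_nonneg _))]
  -- assemble
  have main : ENNReal.ofReal (∫ x, |f x| ∂μ) ≤
      ENNReal.ofReal (C * r * ∫ x, gradMod f x ∂μ +
        r ^ (-α) * ∫ x, w x ^ α * |f x| ∂μ) := by
    rw [ofReal_integral_eq_lintegral_ofReal habs (ae_of_all _ fun x => abs_nonneg _), lc]
    calc ∫⁻ s in Ioi (0:ℝ), μ {x | s < |f x|}
        ≤ ∫⁻ s in Ioi (0:ℝ), (ENNReal.ofReal (C * r * I ((μ {x | s < |f x|}).toReal)) +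
            μ ({x | s < |f x|} ∩ {x | r < w x})) := setLIntegral_mono' measurableSet_Ioi hpt
      _ = (∫⁻ s in Ioi (0:ℝ), ENNReal.ofReal (C * r * I ((μ {x | s < |f x|}).toReal))) +
            ∫⁻ s in Ioi (0:ℝ), μ ({x | s < |f x|} ∩ {x | r < w x}) :=
          lintegral_add_right _ hBmeas
      _ ≤ ENNReal.ofReal (C * r) * ENNReal.ofReal (∫ x, gradMod f x ∂μ) +
            ENNReal.ofReal (r ^ (-α)) * ENNReal.ofReal (∫ x, w x ^ α * |f x| ∂μ) :=
          add_le_add part1a partB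
      _ = ENNReal.ofReal (C * r * ∫ x, gradMod f x ∂μ +
            r ^ (-α) * ∫ x, w x ^ α * |f x| ∂μ) := by
          rw [← ENNReal.ofReal_mul hCr, ← ENNReal.ofReal_mul hrna,
            ← ENNReal.ofReal_add (mul_nonneg hCr hGnn) (mul_nonneg hrna hWnn)]
  have hfinal := (ENNReal.ofReal_le_ofReal_iff
    (add_nonneg (mul_nonneg hCr hGnn) (mul_nonneg hrna hWnn))).1 main
  have h1 : 0 ≤ C * r * ∫ x, gradMod f x ∂μ := mul_nonneg hCr hGnn
  have h2 : 0 ≤ r ^ (-α) * ∫ x, w x ^ α * |f x| ∂μ := mul_nonneg hrna hWnn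
  linarith
end

section
/- (Euclidean L¹ uncertainty inequality with weak-L^n weights.) Let n ≥ 2. There exists a constant c(n) > 0 such that for every measurable w : ℝⁿ → (0,∞) with ‖1/w‖_{L^{n,∞}} < ∞ and every Lipschitz function f : ℝⁿ → ℝ with compact support, ∫_{ℝⁿ} |f(x)| dx ≤ c(n)·‖1/w‖_{L^{n,∞}}^{1/2}·(∫_{ℝⁿ} |∇f(x)| dx)^{1/2}·(∫_{ℝⁿ} w(x)|f(x)| dx)^{1/2}. -/
open MeasureTheory Set
open scoped ENNReal NNReal

/-- The weak-`Lⁿ` quasinorm of `W`: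
`‖W‖_{L^{n,∞}} = sup_{t>0} t · (λ{W > t})^{1/n}`. -/
noncomputable def weakLnNorm {α : Type*} [MeasurableSpace α] (μ : Measure α) (n : ℕ)
    (W : α → ℝ) : ℝ≥0∞ :=
  ⨆ t ∈ Set.Ioi (0:ℝ), ENNReal.ofReal t * μ {x | t < W x} ^ ((n : ℝ)⁻¹)

namespace EuclideanUncertainty

open ContinuousLinearMap Metric Filter
open scoped Convolution Topology



variable {n : ℕ}

theorem norm_fderiv_conv_le {f : EuclideanSpace ℝ (Fin n) → ℝ} {K : ℝ≥0}
    (hf : LipschitzWith K f) (h2f : HasCompactSupport f)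
    (φ : ContDiffBump (0 : EuclideanSpace ℝ (Fin n))) (x : EuclideanSpace ℝ (Fin n)) :
    ‖fderiv ℝ (φ.normed volume ⋆[lsmul ℝ ℝ] f) x‖
      ≤ ∫ y, φ.normed volume y * ‖fderiv ℝ f (x - y)‖ := by
  set ψ := φ.normed (volume : Measure (EuclideanSpace ℝ (Fin n))) with hψdef
  have hψc : Continuous ψ := φ.continuous_normed
  have hψsupp : HasCompactSupport ψ := φ.hasCompactSupport_normed
  set g := ψ ⋆[lsmul ℝ ℝ] f with hgdef
  have hgc : ContDiff ℝ 1 g :=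
    hψsupp.contDiff_convolution_left _ φ.contDiff_normed hf.continuous.locallyIntegrable
  have hK : ∀ z, ‖fderiv ℝ f z‖ ≤ (K : ℝ) := fun z => norm_fderiv_le_of_lipschitz ℝ hf
  have measF : Measurable fun y => ψ y • fderiv ℝ f (x - y) :=
    hψc.measurable.smul ((measurable_fderiv ℝ f).comp (measurable_const.sub measurable_id))
  have hFi : Integrable (fun y => ψ y • fderiv ℝ f (x - y)) := by
    refine Integrable.mono' ((φ.integrable_normed).mul_const (K : ℝ))
      measF.aestronglyMeasurable ?_
    filter_upwards with y
    rw [norm_smul, Real.norm_of_nonneg (φ.nonneg_normed y)]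
    exact mul_le_mul_of_nonneg_left (hK _) (φ.nonneg_normed y)
  set T : EuclideanSpace ℝ (Fin n) →L[ℝ] ℝ := ∫ y, ψ y • fderiv ℝ f (x - y) with hTdef
  have hconv : ∀ z, g z = ∫ y, ψ y * f (z - y) := by
    intro z
    simp [hgdef, convolution_def, smul_eq_mul]
  have hfi : ∀ z : EuclideanSpace ℝ (Fin n), Integrable (fun y => ψ y * f (z - y)) := by
    intro z
    refine (hψc.mul (hf.continuous.comp (continuous_const.sub continuous_id))).integrable_of_hasCompactSupport ?_
    exact hψsupp.mul_right
  have hT : fderiv ℝ g x = T := by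
    refine ContinuousLinearMap.ext fun v => ?_
    have hdiff : DifferentiableAt ℝ g x := (hgc.differentiable one_ne_zero).differentiableAt
    have hinner : HasDerivAt (fun t : ℝ => x + t • v) v 0 := by
      simpa using ((hasDerivAt_id (0 : ℝ)).smul_const v).const_add x
    have hline : HasDerivAt (fun t : ℝ => g (x + t • v)) (fderiv ℝ g x v) 0 := by
      have h0 : HasFDerivAt g (fderiv ℝ g x) ((fun t : ℝ => x + t • v) 0) := by
        simpa using hdiff.hasFDerivAt
      exact h0.comp_hasDerivAt 0 hinner
    have lim1 : Tendsto (slope (fun t : ℝ => g (x + t • v)) 0) (𝓝[≠] 0)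
        (𝓝 (fderiv ℝ g x v)) := hasDerivAt_iff_tendsto_slope.mp hline
    have hTv : T v = ∫ y, ψ y * (fderiv ℝ f (x - y) v) := by
      rw [hTdef, ContinuousLinearMap.integral_apply hFi]
      simp [smul_eq_mul]
    have key : Tendsto (fun t : ℝ => ∫ y, t⁻¹ * (ψ y * (f (x + t • v - y) - f (x - y))))
        (𝓝[≠] 0) (𝓝 (∫ y, ψ y * (fderiv ℝ f (x - y) v))) := by
      apply tendsto_integral_filter_of_dominated_convergence
        (fun y => ψ y * ((K : ℝ) * ‖v‖))
      · filter_upwards with t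
        exact (continuous_const.mul (hψc.mul ((hf.continuous.comp
          (continuous_const.sub continuous_id)).sub (hf.continuous.comp
          (continuous_const.sub continuous_id))))).aestronglyMeasurable
      · filter_upwards [self_mem_nhdsWithin] with t ht
        filter_upwards with y
        have habs : |f (x + t • v - y) - f (x - y)| ≤ (K : ℝ) * (|t| * ‖v‖) := by
          have h1 := hf.dist_le_mul (x + t • v - y) (x - y)
          have h2 : dist (x + t • v - y) (x - y) = |t| * ‖v‖ := by
            rw [dist_eq_norm]
            have : x + t • v - y - (x - y) = t • v := by abel
            rw [this, norm_smul, Real.norm_eq_abs]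
          rwa [Real.dist_eq, h2] at h1
        have ht' : (0 : ℝ) < |t| := abs_pos.mpr ht
        rw [Real.norm_eq_abs, abs_mul, abs_mul, abs_inv,
          abs_of_nonneg (φ.nonneg_normed y)]
        calc |t|⁻¹ * (ψ y * |f (x + t • v - y) - f (x - y)|)
            ≤ |t|⁻¹ * (ψ y * ((K : ℝ) * (|t| * ‖v‖))) := by
              have hψy : 0 ≤ ψ y := φ.nonneg_normed y
              gcongr
          _ = ψ y * ((K : ℝ) * ‖v‖) := by
              have hre : ψ y * ((K : ℝ) * (|t| * ‖v‖)) = |t| * (ψ y * ((K : ℝ) * ‖v‖)) := by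
                ring
              rw [hre, inv_mul_cancel_left₀ ht'.ne']
      · exact (φ.integrable_normed).mul_const _
      · have hae : ∀ᵐ y : EuclideanSpace ℝ (Fin n) ∂volume, DifferentiableAt ℝ f (x - y) := by
          exact (Measure.measurePreserving_sub_left volume x).quasiMeasurePreserving.ae
            (hf.ae_differentiableAt)
        filter_upwards [hae] with y hy
        have hinner2 : HasDerivAt (fun t : ℝ => x - y + t • v) v 0 := by
          simpa using ((hasDerivAt_id (0 : ℝ)).smul_const v).const_add (x - y)
        have hd : HasDerivAt (fun t : ℝ => f (x - y + t • v)) (fderiv ℝ f (x - y) v) 0 := by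
          have h0 : HasFDerivAt f (fderiv ℝ f (x - y)) ((fun t : ℝ => x - y + t • v) 0) := by
            simpa using hy.hasFDerivAt
          exact h0.comp_hasDerivAt 0 hinner2
        have := (hasDerivAt_iff_tendsto_slope.mp hd).const_mul (ψ y)
        refine Tendsto.congr' ?_ this
        filter_upwards [self_mem_nhdsWithin] with t ht
        rw [slope_def_field]
        have hxy : x + t • v - y = x - y + t • v := by abel
        rw [hxy]
        simp only [zero_smul, add_zero, sub_zero]
        ring
    have lim2 : Tendsto (slope (fun t : ℝ => g (x + t • v)) 0) (𝓝[≠] 0) (𝓝 (T v)) := by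
      rw [hTv]
      refine Tendsto.congr' ?_ key
      filter_upwards [self_mem_nhdsWithin] with t ht
      show (∫ y, t⁻¹ * (ψ y * (f (x + t • v - y) - f (x - y))))
          = slope (fun t : ℝ => g (x + t • v)) 0 t
      rw [slope_def_field]
      simp only [sub_zero, zero_smul, add_zero]
      rw [hconv (x + t • v), hconv x, ← integral_sub (hfi _) (hfi _),
        div_eq_inv_mul, ← integral_const_mul]
      simp only [mul_sub]
    exact tendsto_nhds_unique lim1 lim2
  rw [hT, hTdef]
  calc ‖∫ y, ψ y • fderiv ℝ f (x - y)‖ ≤ ∫ y, ‖ψ y • fderiv ℝ f (x - y)‖ :=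
        norm_integral_le_integral_norm _
    _ = ∫ y, ψ y * ‖fderiv ℝ f (x - y)‖ := by
        refine integral_congr_ae (ae_of_all _ fun y => ?_)
        simp only [norm_smul, Real.norm_eq_abs, abs_of_nonneg (show 0 ≤ ψ y from φ.nonneg_normed y)]

theorem lintegral_fderiv_conv_le {f : EuclideanSpace ℝ (Fin n) → ℝ} {K : ℝ≥0}
    (hf : LipschitzWith K f) (h2f : HasCompactSupport f)
    (φ : ContDiffBump (0 : EuclideanSpace ℝ (Fin n))) :
    ∫⁻ x, ENNReal.ofReal ‖fderiv ℝ (φ.normed volume ⋆[lsmul ℝ ℝ] f) x‖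
      ≤ ∫⁻ x, ENNReal.ofReal ‖fderiv ℝ f x‖ := by
  set ψ := φ.normed (volume : Measure (EuclideanSpace ℝ (Fin n))) with hψdef
  have hnn : ∀ x y : EuclideanSpace ℝ (Fin n), 0 ≤ ψ y * ‖fderiv ℝ f (x - y)‖ :=
    fun x y => mul_nonneg (φ.nonneg_normed y) (norm_nonneg _)
  have hint : ∀ x : EuclideanSpace ℝ (Fin n),
      Integrable (fun y => ψ y * ‖fderiv ℝ f (x - y)‖) := by
    intro x
    refine Integrable.mono' ((φ.integrable_normed).mul_const (K : ℝ))
      ((φ.continuous_normed.measurable.mul (((measurable_fderiv ℝ f).norm).comp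
        (measurable_const.sub measurable_id))).aestronglyMeasurable) ?_
    filter_upwards with y
    rw [Real.norm_eq_abs, abs_of_nonneg (hnn x y)]
    exact mul_le_mul_of_nonneg_left (norm_fderiv_le_of_lipschitz ℝ hf) (φ.nonneg_normed y)
  calc ∫⁻ x, ENNReal.ofReal ‖fderiv ℝ (ψ ⋆[lsmul ℝ ℝ] f) x‖
      ≤ ∫⁻ x, ∫⁻ y, ENNReal.ofReal (ψ y * ‖fderiv ℝ f (x - y)‖) := by
        refine lintegral_mono fun x => ?_
        rw [← ofReal_integral_eq_lintegral_ofReal (hint x) (ae_of_all _ (hnn x))]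
        exact ENNReal.ofReal_le_ofReal (norm_fderiv_conv_le hf h2f φ x)
    _ = ∫⁻ y, ∫⁻ x, ENNReal.ofReal (ψ y * ‖fderiv ℝ f (x - y)‖) := by
        refine lintegral_lintegral_swap ?_
        exact ((φ.continuous_normed.measurable.comp measurable_snd).mul
          (((measurable_fderiv ℝ f).norm).comp
            (measurable_fst.sub measurable_snd))).ennreal_ofReal.aemeasurable
    _ = ∫⁻ y, ENNReal.ofReal (ψ y) * ∫⁻ x, ENNReal.ofReal ‖fderiv ℝ f (x - y)‖ := by
        refine lintegral_congr fun y => ?_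
        simp_rw [ENNReal.ofReal_mul (show 0 ≤ ψ y from φ.nonneg_normed y)]
        exact lintegral_const_mul _ (((measurable_fderiv ℝ f).norm).comp
          (measurable_id.sub measurable_const)).ennreal_ofReal
    _ = ∫⁻ y, ENNReal.ofReal (ψ y) * ∫⁻ x, ENNReal.ofReal ‖fderiv ℝ f x‖ := by
        refine lintegral_congr fun y => ?_
        congr 1
        exact (measurePreserving_sub_right volume y).lintegral_comp
          (measurable_fderiv ℝ f).norm.ennreal_ofReal
    _ = (∫⁻ y, ENNReal.ofReal (ψ y)) * ∫⁻ x, ENNReal.ofReal ‖fderiv ℝ f x‖ :=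
        lintegral_mul_const _ φ.continuous_normed.measurable.ennreal_ofReal
    _ = ∫⁻ x, ENNReal.ofReal ‖fderiv ℝ f x‖ := by
        rw [← ofReal_integral_eq_lintegral_ofReal φ.integrable_normed
          (ae_of_all _ φ.nonneg_normed), φ.integral_normed]
        simp

theorem dist_conv_le {f : EuclideanSpace ℝ (Fin n) → ℝ} {K : ℝ≥0}
    (hf : LipschitzWith K f)
    (φ : ContDiffBump (0 : EuclideanSpace ℝ (Fin n))) (x : EuclideanSpace ℝ (Fin n)) :
    dist ((φ.normed volume ⋆[lsmul ℝ ℝ] f) x) (f x) ≤ K * φ.rOut := by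
  refine φ.dist_normed_convolution_le hf.continuous.aestronglyMeasurable fun z hz => ?_
  calc dist (f z) (f x) ≤ K * dist z x := hf.dist_le_mul z x
    _ ≤ K * φ.rOut := by
        have := (mem_ball.mp hz).le
        gcongr

theorem sobolev_lip (hn : 2 ≤ n) {f : EuclideanSpace ℝ (Fin n) → ℝ} {K : ℝ≥0}
    (hf : LipschitzWith K f) (h2f : HasCompactSupport f) :
    ∫⁻ x, ENNReal.ofReal |f x| ^ ((n : ℝ)/((n : ℝ) - 1))
      ≤ (lintegralPowLePowLIntegralFDerivConst
            (volume : Measure (EuclideanSpace ℝ (Fin n))) ((n : ℝ)/((n : ℝ) - 1)) : ℝ≥0∞)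
        * (∫⁻ x, ENNReal.ofReal ‖fderiv ℝ f x‖) ^ ((n : ℝ)/((n : ℝ) - 1)) := by
  set p := (n : ℝ)/((n : ℝ) - 1) with hpdef
  have hn1 : (1 : ℝ) < (n : ℝ) := by exact_mod_cast lt_of_lt_of_le one_lt_two hn
  have hp : Real.HolderConjugate (n : ℝ) p := (Real.holderConjugate_iff_eq_conjExponent hn1).mpr rfl
  have hfr : Real.HolderConjugate (Module.finrank ℝ (EuclideanSpace ℝ (Fin n))) p := by
    rw [finrank_euclideanSpace_fin]; exact hp
  set φk : ℕ → ContDiffBump (0 : EuclideanSpace ℝ (Fin n)) := fun k =>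
    ⟨((k : ℝ) + 1)⁻¹/2, ((k : ℝ) + 1)⁻¹, by positivity, half_lt_self (by positivity)⟩ with hφk
  set gk : ℕ → EuclideanSpace ℝ (Fin n) → ℝ :=
    fun k => (φk k).normed volume ⋆[lsmul ℝ ℝ] f with hgk
  have hgc : ∀ k, ContDiff ℝ 1 (gk k) := fun k =>
    (φk k).hasCompactSupport_normed.contDiff_convolution_left _ (φk k).contDiff_normed
      hf.continuous.locallyIntegrable
  have hgsupp : ∀ k, HasCompactSupport (gk k) := fun k =>
    HasCompactSupport.convolution (L := lsmul ℝ ℝ) (μ := volume) (φk k).hasCompactSupport_normed h2f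
  have htend : ∀ x, Tendsto (fun k => ENNReal.ofReal |gk k x| ^ p) atTop
      (𝓝 (ENNReal.ofReal |f x| ^ p)) := by
    intro x
    have h1 : Tendsto (fun k => gk k x) atTop (𝓝 (f x)) := by
      rw [tendsto_iff_dist_tendsto_zero]
      refine squeeze_zero (fun k => dist_nonneg) (fun k => dist_conv_le hf (φk k) x) ?_
      have h0 : Tendsto (fun k : ℕ => 1 / ((k : ℝ) + 1)) atTop (𝓝 0) :=
        tendsto_one_div_add_atTop_nhds_zero_nat
      have := h0.const_mul (K : ℝ)
      simpa [one_div] using this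
    have hF : Continuous fun r : ℝ => ENNReal.ofReal |r| ^ p :=
      (ENNReal.continuous_rpow_const.comp (ENNReal.continuous_ofReal.comp continuous_abs))
    exact (hF.tendsto (f x)).comp h1
  calc ∫⁻ x, ENNReal.ofReal |f x| ^ p
      = ∫⁻ x, Filter.liminf (fun k => ENNReal.ofReal |gk k x| ^ p) atTop := by
        exact lintegral_congr fun x => ((htend x).liminf_eq).symm
    _ ≤ Filter.liminf (fun k => ∫⁻ x, ENNReal.ofReal |gk k x| ^ p) atTop := by
        refine lintegral_liminf_le fun k => ?_
        exact ((hgc k).continuous.abs.measurable.ennreal_ofReal).pow_const p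
    _ ≤ (lintegralPowLePowLIntegralFDerivConst
            (volume : Measure (EuclideanSpace ℝ (Fin n))) p : ℝ≥0∞)
        * (∫⁻ x, ENNReal.ofReal ‖fderiv ℝ f x‖) ^ p := by
        have hk : ∀ k, ∫⁻ x, ENNReal.ofReal |gk k x| ^ p
            ≤ (lintegralPowLePowLIntegralFDerivConst
                  (volume : Measure (EuclideanSpace ℝ (Fin n))) p : ℝ≥0∞)
              * (∫⁻ x, ENNReal.ofReal ‖fderiv ℝ f x‖) ^ p := by
          intro k
          have hp0 : (0 : ℝ) ≤ p := hp.symm.nonneg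
          calc ∫⁻ x, ENNReal.ofReal |gk k x| ^ p
              = ∫⁻ x, (‖gk k x‖₊ : ℝ≥0∞) ^ p := by
                simp_rw [← Real.norm_eq_abs, ofReal_norm, enorm_eq_nnnorm]
            _ ≤ (lintegralPowLePowLIntegralFDerivConst
                  (volume : Measure (EuclideanSpace ℝ (Fin n))) p : ℝ≥0∞)
                * (∫⁻ x, (‖fderiv ℝ (gk k) x‖₊ : ℝ≥0∞)) ^ p :=
                lintegral_pow_le_pow_lintegral_fderiv volume (hgc k) (hgsupp k) hfr
            _ = (lintegralPowLePowLIntegralFDerivConst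
                  (volume : Measure (EuclideanSpace ℝ (Fin n))) p : ℝ≥0∞)
                * (∫⁻ x, ENNReal.ofReal ‖fderiv ℝ (gk k) x‖) ^ p := by
                simp_rw [ofReal_norm, enorm_eq_nnnorm]
            _ ≤ (lintegralPowLePowLIntegralFDerivConst
                  (volume : Measure (EuclideanSpace ℝ (Fin n))) p : ℝ≥0∞)
                * (∫⁻ x, ENNReal.ofReal ‖fderiv ℝ f x‖) ^ p :=
                mul_le_mul_right (ENNReal.rpow_le_rpow
                  (lintegral_fderiv_conv_le hf h2f _) hp0) _
        exact (Filter.liminf_le_liminf (Filter.Eventually.of_forall hk)).trans_eq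
          (Filter.liminf_const _)

end EuclideanUncertainty

/-- **Euclidean L¹ uncertainty inequality with weak-`Lⁿ` weights.**
For `n ≥ 2` there is `c(n) > 0` such that for every measurable `w : ℝⁿ → (0,∞)` with
`‖1/w‖_{L^{n,∞}} < ∞` and every compactly supported Lipschitz `f : ℝⁿ → ℝ`,
`∫ |f| ≤ c(n) ‖1/w‖_{L^{n,∞}}^{1/2} (∫ |∇f|)^{1/2} (∫ w |f|)^{1/2}`
(in the extended reals). -/
theorem euclidean_l1_uncertainty (n : ℕ) (hn : 2 ≤ n) :
    ∃ c : ℝ, 0 < c ∧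
      ∀ w : EuclideanSpace ℝ (Fin n) → ℝ, Measurable w → (∀ x, 0 < w x) →
        weakLnNorm volume n (fun x => (w x)⁻¹) ≠ ⊤ →
        ∀ (K : ℝ≥0) (f : EuclideanSpace ℝ (Fin n) → ℝ),
          LipschitzWith K f → HasCompactSupport f →
          ∫⁻ x, ENNReal.ofReal |f x| ≤
            ENNReal.ofReal c * (weakLnNorm volume n (fun x => (w x)⁻¹)) ^ ((1:ℝ)/2) *
              (∫⁻ x, ENNReal.ofReal ‖fderiv ℝ f x‖) ^ ((1:ℝ)/2) *
                (∫⁻ x, ENNReal.ofReal (w x * |f x|)) ^ ((1:ℝ)/2) := by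
  classical
  set p := (n : ℝ)/((n : ℝ) - 1) with hpdef
  have hn1 : (1:ℝ) < (n:ℝ) := by exact_mod_cast lt_of_lt_of_le one_lt_two hn
  have hnR : (0:ℝ) < (n:ℝ) := lt_trans one_pos hn1
  have hp : Real.HolderConjugate (n:ℝ) p := (Real.holderConjugate_iff_eq_conjExponent hn1).mpr rfl
  have hp0 : (0:ℝ) < p := hp.symm.pos
  set CM : ℝ := ((lintegralPowLePowLIntegralFDerivConst
    (volume : Measure (EuclideanSpace ℝ (Fin n))) p : ℝ≥0) : ℝ) with hCMdef
  have hCM0 : (0:ℝ) ≤ CM := NNReal.coe_nonneg _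
  set c1 : ℝ := 2 * (CM + 1) ^ ((1:ℝ)/p) with hc1def
  have hc10 : 0 < c1 := by positivity
  refine ⟨2 * c1 ^ ((1:ℝ)/2), by positivity, ?_⟩
  intro w hw hwpos hNtop K f hf h2f
  set N := weakLnNorm volume n (fun x => (w x)⁻¹) with hNdef
  set A := ∫⁻ x, ENNReal.ofReal ‖fderiv ℝ f x‖ with hAdef
  set B := ∫⁻ x, ENNReal.ofReal (w x * |f x|) with hBdef
  set L := ∫⁻ x, ENNReal.ofReal |f x| with hLdef
  have hfc : Continuous f := hf.continuous
  have hmf : Measurable fun x => ENNReal.ofReal |f x| := hfc.abs.measurable.ennreal_ofReal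
  -- `N ≠ 0`
  have hN0 : N ≠ 0 := by
    intro h0
    have hterm : ∀ t : ℝ, 0 < t →
        volume {x : EuclideanSpace ℝ (Fin n) | t < (w x)⁻¹} = 0 := by
      intro t ht
      have hle : ENNReal.ofReal t
          * volume {x : EuclideanSpace ℝ (Fin n) | t < (w x)⁻¹} ^ ((n:ℝ)⁻¹) ≤ N := by
        rw [hNdef, weakLnNorm]
        exact le_iSup₂ (f := fun (u : ℝ) (_ : u ∈ Set.Ioi (0:ℝ)) => ENNReal.ofReal u
          * volume {x : EuclideanSpace ℝ (Fin n) | u < (w x)⁻¹} ^ ((n:ℝ)⁻¹)) t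
          (mem_Ioi.mpr ht)
      rw [h0, nonpos_iff_eq_zero] at hle
      rcases mul_eq_zero.mp hle with h | h
      · exact absurd h (by simp [ENNReal.ofReal_eq_zero, not_le, ht])
      · rw [ENNReal.rpow_eq_zero_iff] at h
        rcases h with ⟨h1, _⟩ | ⟨_, h2⟩
        · exact h1
        · exfalso
          have : (0:ℝ) < (n:ℝ)⁻¹ := by positivity
          linarith
    have huniv : (univ : Set (EuclideanSpace ℝ (Fin n)))
        ⊆ ⋃ k : ℕ, {x | ((k:ℝ)+1)⁻¹ < (w x)⁻¹} := by
      intro x _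
      obtain ⟨k, hk⟩ := exists_nat_gt (w x)
      refine mem_iUnion.mpr ⟨k, ?_⟩
      have h1 : w x < (k:ℝ) + 1 := hk.trans (lt_add_one _)
      exact inv_strictAnti₀ (hwpos x) h1
    have hz : volume (univ : Set (EuclideanSpace ℝ (Fin n))) = 0 :=
      measure_mono_null huniv (measure_iUnion_null fun k => hterm _ (by positivity))
    have hpos : 0 < volume (univ : Set (EuclideanSpace ℝ (Fin n))) :=
      isOpen_univ.measure_pos volume ⟨0, trivial⟩
    exact absurd hz hpos.ne'
  -- case `B = 0`
  by_cases hB0 : B = 0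
  · have hae : ∀ᵐ x : EuclideanSpace ℝ (Fin n) ∂volume,
        ENNReal.ofReal (w x * |f x|) = 0 := by
      rw [hBdef, lintegral_eq_zero_iff (show
        Measurable fun x => ENNReal.ofReal (w x * |f x|) from (hw.mul hfc.abs.measurable).ennreal_ofReal)] at hB0
      exact hB0
    have hL0 : L = 0 := by
      rw [hLdef, lintegral_eq_zero_iff hmf]
      filter_upwards [hae] with x hx
      simp only [Pi.zero_apply] at hx ⊢
      rw [ENNReal.ofReal_eq_zero] at hx ⊢
      nlinarith [hwpos x, abs_nonneg (f x)]
    rw [hL0]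
    exact zero_le
  -- case `S = 0`
  set S := ∫⁻ x, ENNReal.ofReal |f x| ^ p with hSdef
  by_cases hS0 : S = 0
  · have hae : ∀ᵐ x : EuclideanSpace ℝ (Fin n) ∂volume,
        ENNReal.ofReal |f x| ^ p = 0 := by
      rw [hSdef, lintegral_eq_zero_iff (hmf.pow_const p)] at hS0
      exact hS0
    have hL0 : L = 0 := by
      rw [hLdef, lintegral_eq_zero_iff hmf]
      filter_upwards [hae] with x hx
      simp only [Pi.zero_apply] at hx ⊢
      rw [ENNReal.rpow_eq_zero_iff] at hx
      rcases hx with ⟨h1, _⟩ | ⟨_, h2⟩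
      · exact h1
      · exact absurd h2 (not_lt.mpr hp0.le)
    rw [hL0]
    exact zero_le
  -- Sobolev bound
  have hsob : S ≤ ENNReal.ofReal (CM + 1) * A ^ p := by
    refine (EuclideanUncertainty.sobolev_lip hn hf h2f).trans ?_
    refine mul_le_mul_left ?_ _
    rw [ENNReal.ofReal_add hCM0 zero_le_one, ENNReal.ofReal_coe_nnreal, ENNReal.ofReal_one]
    exact le_add_of_nonneg_right zero_le
  have hA0 : A ≠ 0 := by
    intro h
    apply hS0
    rw [h, ENNReal.zero_rpow_of_pos hp0, mul_zero, nonpos_iff_eq_zero] at hsob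
    exact hsob
  -- the key inequality
  have key : ∀ t : ℝ, 0 < t →
      L ≤ (ENNReal.ofReal c1 * N * A) * ENNReal.ofReal t + (ENNReal.ofReal t)⁻¹ * B := by
    intro t ht
    set Et : Set (EuclideanSpace ℝ (Fin n)) := {x | w x ≤ t} with hEtdef
    have hEtm : MeasurableSet Et := measurableSet_le hw measurable_const
    have hEtvol : volume Et ^ ((n:ℝ)⁻¹) ≤ ENNReal.ofReal (2*t) * N := by
      have hu : (0:ℝ) < (2*t)⁻¹ := by positivity
      have hle : ENNReal.ofReal ((2*t)⁻¹)
          * volume {x : EuclideanSpace ℝ (Fin n) | (2*t)⁻¹ < (w x)⁻¹} ^ ((n:ℝ)⁻¹) ≤ N := by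
        rw [hNdef, weakLnNorm]
        exact le_iSup₂ (f := fun (u : ℝ) (_ : u ∈ Set.Ioi (0:ℝ)) => ENNReal.ofReal u
          * volume {x : EuclideanSpace ℝ (Fin n) | u < (w x)⁻¹} ^ ((n:ℝ)⁻¹)) ((2*t)⁻¹)
          (mem_Ioi.mpr hu)
      have ha0 : ENNReal.ofReal ((2*t)⁻¹) ≠ 0 := by
        simp only [ne_eq, ENNReal.ofReal_eq_zero, not_le]
        positivity
      calc volume Et ^ ((n:ℝ)⁻¹)
          ≤ volume {x : EuclideanSpace ℝ (Fin n) | (2*t)⁻¹ < (w x)⁻¹} ^ ((n:ℝ)⁻¹) := by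
            have hsub : Et ⊆ {x : EuclideanSpace ℝ (Fin n) | (2*t)⁻¹ < (w x)⁻¹} := by
              intro x hx
              have h2 : w x ≤ t := hx
              exact inv_strictAnti₀ (hwpos x) (lt_of_le_of_lt h2 (by linarith))
            exact ENNReal.rpow_le_rpow (measure_mono hsub) (by positivity)
          _ = (ENNReal.ofReal ((2*t)⁻¹))⁻¹ * (ENNReal.ofReal ((2*t)⁻¹)
              * volume {x : EuclideanSpace ℝ (Fin n) | (2*t)⁻¹ < (w x)⁻¹} ^ ((n:ℝ)⁻¹)) := by
            rw [← mul_assoc, ENNReal.inv_mul_cancel ha0 ENNReal.ofReal_ne_top, one_mul]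
          _ ≤ (ENNReal.ofReal ((2*t)⁻¹))⁻¹ * N := mul_le_mul_right hle _
          _ = ENNReal.ofReal (2*t) * N := by
            rw [ENNReal.ofReal_inv_of_pos (by positivity), inv_inv]
    have hsplit : L = (∫⁻ x in Et, ENNReal.ofReal |f x|)
        + ∫⁻ x in Etᶜ, ENNReal.ofReal |f x| := (lintegral_add_compl _ hEtm).symm
    have hHold : (∫⁻ x in Et, ENNReal.ofReal |f x|)
        ≤ S ^ ((1:ℝ)/p) * volume Et ^ ((n:ℝ)⁻¹) := by
      have h2 := ENNReal.lintegral_mul_le_Lp_mul_Lq volume hp.symm hmf.aemeasurable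
        ((measurable_one.indicator hEtm).aemeasurable :
          AEMeasurable (Et.indicator (1 : EuclideanSpace ℝ (Fin n) → ℝ≥0∞)) volume)
      simp only [Pi.mul_apply] at h2
      have h1 : (∫⁻ x in Et, ENNReal.ofReal |f x|)
          = ∫⁻ x, ENNReal.ofReal |f x|
            * Et.indicator (1 : EuclideanSpace ℝ (Fin n) → ℝ≥0∞) x := by
        rw [← lintegral_indicator hEtm]
        refine lintegral_congr fun x => ?_
        by_cases hx : x ∈ Et <;> simp [hx, Set.indicator_apply]
      have h3 : (∫⁻ x, Et.indicator (1 : EuclideanSpace ℝ (Fin n) → ℝ≥0∞) x ^ ((n:ℝ)))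
          = volume Et := by
        have : ∀ x, Et.indicator (1 : EuclideanSpace ℝ (Fin n) → ℝ≥0∞) x ^ ((n:ℝ))
            = Et.indicator (1 : EuclideanSpace ℝ (Fin n) → ℝ≥0∞) x := by
          intro x
          by_cases hx : x ∈ Et <;>
            simp [hx, Set.indicator_apply, ENNReal.one_rpow,
              ENNReal.zero_rpow_of_pos hnR]
        rw [lintegral_congr this, lintegral_indicator_one hEtm]
      rw [h1]
      refine h2.trans ?_
      rw [h3, ← hSdef, one_div (n:ℝ)]
    have hT1 : S ^ ((1:ℝ)/p) ≤ ENNReal.ofReal (CM+1) ^ ((1:ℝ)/p) * A := by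
      have h4 : (ENNReal.ofReal (CM+1) * A ^ p) ^ ((1:ℝ)/p)
          = ENNReal.ofReal (CM+1) ^ ((1:ℝ)/p) * A := by
        rw [ENNReal.mul_rpow_of_nonneg _ _ (by positivity : (0:ℝ) ≤ 1/p),
          ← ENNReal.rpow_mul, mul_one_div, div_self hp0.ne', ENNReal.rpow_one]
      rw [← h4]
      exact ENNReal.rpow_le_rpow hsob (by positivity)
    have hterm2 : (∫⁻ x in Etᶜ, ENNReal.ofReal |f x|) ≤ (ENNReal.ofReal t)⁻¹ * B := by
      have hmono : ∀ x ∈ Etᶜ, ENNReal.ofReal |f x|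
          ≤ (ENNReal.ofReal t)⁻¹ * ENNReal.ofReal (w x * |f x|) := by
        intro x hx
        have htw : t < w x := not_le.mp hx
        have ht0 : ENNReal.ofReal t ≠ 0 := by
          simp [ENNReal.ofReal_eq_zero, not_le, ht]
        have h5 : ENNReal.ofReal t * ENNReal.ofReal |f x|
            ≤ ENNReal.ofReal (w x * |f x|) := by
          rw [← ENNReal.ofReal_mul ht.le]
          exact ENNReal.ofReal_le_ofReal
            (mul_le_mul_of_nonneg_right htw.le (abs_nonneg _))
        calc ENNReal.ofReal |f x|
            = (ENNReal.ofReal t)⁻¹ * (ENNReal.ofReal t * ENNReal.ofReal |f x|) := by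
              rw [← mul_assoc, ENNReal.inv_mul_cancel ht0 ENNReal.ofReal_ne_top, one_mul]
          _ ≤ (ENNReal.ofReal t)⁻¹ * ENNReal.ofReal (w x * |f x|) :=
              mul_le_mul_right h5 _
      calc (∫⁻ x in Etᶜ, ENNReal.ofReal |f x|)
          ≤ ∫⁻ x in Etᶜ, (ENNReal.ofReal t)⁻¹ * ENNReal.ofReal (w x * |f x|) :=
            setLIntegral_mono ((measurable_const.mul
              ((hw.mul hfc.abs.measurable).ennreal_ofReal))) hmono
        _ = (ENNReal.ofReal t)⁻¹ * ∫⁻ x in Etᶜ, ENNReal.ofReal (w x * |f x|) :=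
            lintegral_const_mul _ ((hw.mul hfc.abs.measurable).ennreal_ofReal)
        _ ≤ (ENNReal.ofReal t)⁻¹ * B := by
            rw [hBdef]
            exact mul_le_mul_right (setLIntegral_le_lintegral _ _) _
    calc L = (∫⁻ x in Et, ENNReal.ofReal |f x|) + ∫⁻ x in Etᶜ, ENNReal.ofReal |f x| := hsplit
      _ ≤ S ^ ((1:ℝ)/p) * volume Et ^ ((n:ℝ)⁻¹) + (ENNReal.ofReal t)⁻¹ * B :=
          add_le_add hHold hterm2
      _ ≤ (ENNReal.ofReal (CM+1) ^ ((1:ℝ)/p) * A) * (ENNReal.ofReal (2*t) * N)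
            + (ENNReal.ofReal t)⁻¹ * B := by
          refine add_le_add_left ?_ _
          exact mul_le_mul' hT1 hEtvol
      _ = (ENNReal.ofReal c1 * N * A) * ENNReal.ofReal t + (ENNReal.ofReal t)⁻¹ * B := by
          congr 1
          rw [hc1def, ENNReal.ofReal_mul (by norm_num : (0:ℝ) ≤ 2),
            ENNReal.ofReal_rpow_of_pos (by positivity : (0:ℝ) < CM + 1),
            ENNReal.ofReal_mul (by norm_num : (0:ℝ) ≤ 2)]
          ring
  -- optimization
  set D := ENNReal.ofReal c1 * N * A with hDdef
  have hD0 : D ≠ 0 := by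
    have h1 : ENNReal.ofReal c1 ≠ 0 := by
      simp [ENNReal.ofReal_eq_zero, not_le, hc10]
    exact mul_ne_zero (mul_ne_zero h1 hN0) hA0
  have hfin : L ≤ 2 * D ^ ((1:ℝ)/2) * B ^ ((1:ℝ)/2) := by
    by_cases hDt : D = ⊤
    · have hrhs : 2 * D ^ ((1:ℝ)/2) * B ^ ((1:ℝ)/2) = ⊤ := by
        rw [hDt, ENNReal.top_rpow_of_pos (by norm_num), ENNReal.mul_top (by norm_num)]
        refine ENNReal.top_mul ?_
        by_cases hBt : B = ⊤
        · rw [hBt, ENNReal.top_rpow_of_pos (by norm_num)]; simp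
        · exact (ENNReal.rpow_pos (pos_iff_ne_zero.mpr hB0) hBt).ne'
      rw [hrhs]; exact le_top
    by_cases hBt : B = ⊤
    · have hrhs : 2 * D ^ ((1:ℝ)/2) * B ^ ((1:ℝ)/2) = ⊤ := by
        rw [hBt, ENNReal.top_rpow_of_pos (by norm_num)]
        refine ENNReal.mul_top ?_
        refine mul_ne_zero (by norm_num) ?_
        exact (ENNReal.rpow_pos (pos_iff_ne_zero.mpr hD0) hDt).ne'
      rw [hrhs]; exact le_top
    · set d := D.toReal with hddef
      set b := B.toReal with hbdef
      have hd0 : 0 < d := ENNReal.toReal_pos hD0 hDt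
      have hb0 : 0 < b := ENNReal.toReal_pos hB0 hBt
      set t0 := Real.sqrt b / Real.sqrt d with ht0def
      have ht0 : 0 < t0 := by positivity
      have hDe : D = ENNReal.ofReal d := (ENNReal.ofReal_toReal hDt).symm
      have hBe : B = ENNReal.ofReal b := (ENNReal.ofReal_toReal hBt).symm
      have hdt0 : d * t0 = Real.sqrt (d * b) := by
        calc d * (Real.sqrt b / Real.sqrt d) = d / Real.sqrt d * Real.sqrt b := by ring
          _ = Real.sqrt d * Real.sqrt b := by rw [Real.div_sqrt]
          _ = Real.sqrt (d * b) := (Real.sqrt_mul hd0.le b).symm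
      have hbt0 : b / t0 = Real.sqrt (d * b) := by
        calc b / (Real.sqrt b / Real.sqrt d)
            = b * Real.sqrt d / Real.sqrt b := div_div_eq_mul_div b _ _
          _ = b / Real.sqrt b * Real.sqrt d := mul_div_right_comm b _ _
          _ = Real.sqrt b * Real.sqrt d := by rw [Real.div_sqrt]
          _ = Real.sqrt (d * b) := by rw [mul_comm, Real.sqrt_mul hd0.le]
      have hsum := key t0 ht0
      have he1 : D * ENNReal.ofReal t0 = ENNReal.ofReal (Real.sqrt (d * b)) := by
        rw [hDe, ← ENNReal.ofReal_mul hd0.le, hdt0]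
      have he2 : (ENNReal.ofReal t0)⁻¹ * B = ENNReal.ofReal (Real.sqrt (d * b)) := by
        rw [hBe, ← ENNReal.ofReal_inv_of_pos ht0,
          ← ENNReal.ofReal_mul (by positivity : (0:ℝ) ≤ t0⁻¹), inv_mul_eq_div, hbt0]
      have hDB : D ^ ((1:ℝ)/2) * B ^ ((1:ℝ)/2) = ENNReal.ofReal (Real.sqrt (d * b)) := by
        rw [hDe, hBe, ENNReal.ofReal_rpow_of_pos hd0, ENNReal.ofReal_rpow_of_pos hb0,
          ← ENNReal.ofReal_mul (by positivity : (0:ℝ) ≤ d ^ ((1:ℝ)/2))]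
        congr 1
        rw [← Real.sqrt_eq_rpow, ← Real.sqrt_eq_rpow, ← Real.sqrt_mul hd0.le]
      calc L ≤ D * ENNReal.ofReal t0 + (ENNReal.ofReal t0)⁻¹ * B := hsum
        _ = 2 * ENNReal.ofReal (Real.sqrt (d * b)) := by rw [he1, he2, two_mul]
        _ = 2 * (D ^ ((1:ℝ)/2) * B ^ ((1:ℝ)/2)) := by rw [hDB]
        _ = 2 * D ^ ((1:ℝ)/2) * B ^ ((1:ℝ)/2) := (mul_assoc _ _ _).symm
  have hexp : D ^ ((1:ℝ)/2)
      = ENNReal.ofReal c1 ^ ((1:ℝ)/2) * N ^ ((1:ℝ)/2) * A ^ ((1:ℝ)/2) := by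
    rw [hDdef, ENNReal.mul_rpow_of_nonneg _ _ (by norm_num : (0:ℝ) ≤ 1/2),
      ENNReal.mul_rpow_of_nonneg _ _ (by norm_num : (0:ℝ) ≤ 1/2)]
  have hcoef : ENNReal.ofReal (2 * c1 ^ ((1:ℝ)/2)) = 2 * ENNReal.ofReal c1 ^ ((1:ℝ)/2) := by
    rw [ENNReal.ofReal_mul (by norm_num : (0:ℝ) ≤ 2), ENNReal.ofReal_ofNat,
      ENNReal.ofReal_rpow_of_pos hc10]
  calc L ≤ 2 * D ^ ((1:ℝ)/2) * B ^ ((1:ℝ)/2) := hfin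
    _ = ENNReal.ofReal (2 * c1 ^ ((1:ℝ)/2)) * N ^ ((1:ℝ)/2) * A ^ ((1:ℝ)/2)
        * B ^ ((1:ℝ)/2) := by
        rw [hexp, hcoef]; ring
end

section
/- (General scheme for constructing isoperimetric weights.) Let (Ω,d,μ) be a metric measure space with isoperimetric profile I assumed concave, continuous, I(0) = 0, strictly positive on (0, μ(Ω)), and (if μ(Ω) < ∞) symmetric about μ(Ω)/2; set Φ(t) = min{t, μ(Ω)/2}/I(min{t, μ(Ω)/2}). Let g : [0, μ(Ω)) → [0,∞) be measurable with g > 0 a.e., let g* denote its decreasing rearrangement with respect to Lebesgue measure, g*(t) = inf{s ≥ 0 : λ{g > s} ≤ t}, and suppose K := sup_{0<t<μ(Ω)} g*(t)·Φ(t) < ∞. Let σ : Ω → [0, μ(Ω)) be measurable and measure preserving (the pushforward of μ under σ is Lebesgue measure on [0, μ(Ω))). Then w := 1/(g* ∘ σ) is an isoperimetric weight: sup_{r>0} (1/r)·Φ(μ{w ≤ r}) ≤ K. -/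
open MeasureTheory Filter Set Topology
open scoped ENNReal NNReal

/-- The interval `[0, μ(Ω))` of `ℝ`, viewed as the natural domain of rearrangements. -/
def domSet {Ω : Type*} [MeasurableSpace Ω] (μ : Measure Ω) : Set ℝ :=
  {u : ℝ | 0 ≤ u ∧ ENNReal.ofReal u < μ Set.univ}

/-- The decreasing rearrangement of `g` with respect to the measure `ν`:
`g*(t) = inf {s ≥ 0 : ν{g > s} ≤ t}`. -/
noncomputable def decRearr (ν : Measure ℝ) (g : ℝ → ℝ) (t : ℝ) : ℝ :=
  sInf {s : ℝ | 0 ≤ s ∧ ν {u | s < g u} ≤ ENNReal.ofReal t}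

/-- `Φ(t) = min{t, μ(Ω)/2} / I(min{t, μ(Ω)/2})` (interpreting `min{t, ∞} = t` when
`μ(Ω) = ∞`). -/
noncomputable def PhiGen {Ω : Type*} [MeasurableSpace Ω] (μ : Measure Ω) (I : ℝ → ℝ)
    (t : ℝ) : ℝ :=
  (min (ENNReal.ofReal t) (μ Set.univ / 2)).toReal /
    I ((min (ENNReal.ofReal t) (μ Set.univ / 2)).toReal)

/-- **general scheme for constructing isoperimetric weights.**
Let `I` be the isoperimetric profile of `(Ω,d,μ)` (concave, continuous, zero at zero,
positive on `(0, μ(Ω))`, and symmetric about `μ(Ω)/2` when `μ(Ω) < ∞`), and let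
`Φ(t) = min{t, μ(Ω)/2}/I(min{t, μ(Ω)/2})`. If `g ≥ 0` is measurable, positive a.e. on
`[0, μ(Ω))`, with decreasing rearrangement `g*` satisfying
`K = sup_{0<t<μ(Ω)} g*(t) Φ(t) < ∞`, and `σ : Ω → [0, μ(Ω))` is measure preserving,
then `w = 1/(g* ∘ σ)` is an isoperimetric weight: `sup_{r>0} (1/r) Φ(μ{w ≤ r}) ≤ K`. -/
theorem construction_of_isoperimetric_weights {Ω : Type*} [MetricSpace Ω]
    [MeasurableSpace Ω] [BorelSpace Ω] (μ : Measure Ω) [IsFiniteMeasureOnCompacts μ]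
    (I : ℝ → ℝ)
    (hIprof : ∀ t : ℝ, 0 ≤ t → ENNReal.ofReal t < μ Set.univ →
      ENNReal.ofReal (I t) = isoProfile μ (ENNReal.ofReal t))
    (hIconc : ConcaveOn ℝ (domSet μ) I)
    (hIcont : ContinuousOn I (domSet μ))
    (hI0 : I 0 = 0)
    (hIpos : ∀ t : ℝ, 0 < t → ENNReal.ofReal t < μ Set.univ → 0 < I t)
    (hIsym : μ Set.univ ≠ ⊤ → ∀ t : ℝ, 0 ≤ t → ENNReal.ofReal t < μ Set.univ →
      I ((μ Set.univ).toReal - t) = I t)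
    (g : ℝ → ℝ) (hg_meas : Measurable g) (hg_nonneg : ∀ t, 0 ≤ g t)
    (hg_pos : ∀ᵐ t ∂(volume.restrict (domSet μ)), 0 < g t)
    (K : ℝ) (hK0 : 0 ≤ K)
    (hK : ∀ t : ℝ, 0 < t → ENNReal.ofReal t < μ Set.univ →
      decRearr (volume.restrict (domSet μ)) g t * PhiGen μ I t ≤ K)
    (σ : Ω → ℝ) (hσ : MeasurePreserving σ μ (volume.restrict (domSet μ))) :
    ∀ r : ℝ, 0 < r →
      PhiGen μ I
          ((μ {x | (decRearr (volume.restrict (domSet μ)) g (σ x))⁻¹ ≤ r}).toReal) ≤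
        K * r := by
  intro r hr
  classical
  set ν := volume.restrict (domSet μ) with hνdef
  -- measurability of the domain
  have hdom_meas : MeasurableSet (domSet μ) := by
    have : domSet μ = Set.Ici 0 ∩ (ENNReal.ofReal ⁻¹' Set.Iio (μ Set.univ)) := by
      ext u; simp [domSet]
    rw [this]
    exact measurableSet_Ici.inter (ENNReal.measurable_ofReal measurableSet_Iio)
  -- the volume of the domain equals the total mass
  have hdomvol : volume (domSet μ) = μ Set.univ := by
    by_cases hMtop : μ Set.univ = ⊤
    · have : domSet μ = Set.Ici (0:ℝ) := by
        ext u; simp [domSet, hMtop, ENNReal.ofReal_lt_top]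
      rw [this, Real.volume_Ici, hMtop]
    · have : domSet μ = Set.Ico (0:ℝ) (μ Set.univ).toReal := by
        ext u
        constructor
        · rintro ⟨h0, hlt⟩
          exact ⟨h0, (ENNReal.ofReal_lt_iff_lt_toReal h0 hMtop).mp hlt⟩
        · rintro ⟨h0, hlt⟩
          exact ⟨h0, (ENNReal.ofReal_lt_iff_lt_toReal h0 hMtop).mpr hlt⟩
      rw [this, Real.volume_Ico, sub_zero, ENNReal.ofReal_toReal hMtop]
  have hνuniv : ν Set.univ = μ Set.univ := by
    rw [hνdef, Measure.restrict_apply_univ]; exact hdomvol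
  -- a.e. positivity of g gives ν {0 < g} = ν univ
  have hgpos_univ : ν {u | 0 < g u} = ν Set.univ := by
    have h0 : ν {u | ¬ 0 < g u} = 0 := by
      have := hg_pos
      rw [ae_iff] at this
      exact this
    refine le_antisymm (measure_mono (Set.subset_univ _)) ?_
    calc ν Set.univ ≤ ν ({u | 0 < g u} ∪ {u | ¬ 0 < g u}) := by
          refine measure_mono ?_
          intro u _
          by_cases h : 0 < g u
          · exact Or.inl h
          · exact Or.inr h
      _ ≤ ν {u | 0 < g u} + ν {u | ¬ 0 < g u} := measure_union_le _ _
      _ = ν {u | 0 < g u} := by rw [h0, add_zero]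
  -- if ν {g > s} ≤ c for all s > 0 then ν univ ≤ c
  have hsup : ∀ c : ℝ≥0∞, (∀ s : ℝ, 0 < s → ν {u | s < g u} ≤ c) → ν Set.univ ≤ c := by
    intro c h
    have hun : {u | 0 < g u} = ⋃ n : ℕ, {u | 1/((n:ℝ)+1) < g u} := by
      ext u
      simp only [Set.mem_setOf_eq, Set.mem_iUnion]
      constructor
      · intro hu
        exact exists_nat_one_div_lt hu
      · rintro ⟨n, hn⟩
        exact lt_trans (by positivity) hn
    have hmono : Monotone (fun n : ℕ => ({u : ℝ | 1/((n:ℝ)+1) < g u} : Set ℝ)) := by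
      intro n n' hnn' u hu
      simp only [Set.mem_setOf_eq] at hu ⊢
      refine lt_of_le_of_lt ?_ hu
      have h1 : (0:ℝ) < (n:ℝ) + 1 := by positivity
      have h2 : ((n:ℝ)+1) ≤ ((n':ℝ)+1) := by
        have : (n:ℝ) ≤ (n':ℝ) := Nat.cast_le.mpr hnn'
        linarith
      exact one_div_le_one_div_of_le h1 h2
    have := Monotone.measure_iUnion (μ := ν) hmono
    have hle : ν {u | 0 < g u} ≤ c := by
      rw [hun, this]
      exact iSup_le fun n => h _ (by positivity)
    rw [← hgpos_univ]; exact hle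
  -- basic facts about decRearr
  set T : ℝ → Set ℝ := fun t => {s : ℝ | 0 ≤ s ∧ ν {u | s < g u} ≤ ENNReal.ofReal t}
    with hTdef
  have hdec : ∀ t, decRearr ν g t = sInf (T t) := fun t => rfl
  have hT_bdd : ∀ t, BddBelow (T t) := fun t => ⟨0, fun s hs => hs.1⟩
  have hT_up : ∀ t s s', s ∈ T t → s ≤ s' → s' ∈ T t := by
    intro t s s' hs hss'
    refine ⟨hs.1.trans hss', le_trans (measure_mono ?_) hs.2⟩
    intro u hu
    exact lt_of_le_of_lt hss' hu
  have hT_mono : ∀ t t', t ≤ t' → T t ⊆ T t' := by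
    intro t t' htt' s hs
    exact ⟨hs.1, hs.2.trans (ENNReal.ofReal_le_ofReal htt')⟩
  have hnonneg : ∀ t, 0 ≤ decRearr ν g t := by
    intro t; rw [hdec]; exact Real.sInf_nonneg (fun s hs => hs.1)
  -- positivity of decRearr on the domain, given nonemptiness
  have hpos : ∀ t : ℝ, (T t).Nonempty → ENNReal.ofReal t < μ Set.univ →
      0 < decRearr ν g t := by
    intro t hne hlt
    rcases (hnonneg t).lt_or_eq with h | h
    · exact h
    · exfalso
      have hall : ∀ s : ℝ, 0 < s → ν {u | s < g u} ≤ ENNReal.ofReal t := by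
        intro s hs
        have hsInf : sInf (T t) < s := by rw [← hdec, ← h]; exact hs
        rcases (csInf_lt_iff (hT_bdd t) hne).mp hsInf with ⟨b, hb, hbs⟩
        exact (hT_up t b s hb hbs.le).2
      have := hsup (ENNReal.ofReal t) hall
      rw [hνuniv] at this
      exact absurd hlt (not_lt.mpr this)
  -- set up the measure of the sublevel set
  set m' := μ {x | (decRearr ν g (σ x))⁻¹ ≤ r} with hm'def
  by_cases hm'top : m' = ⊤
  · rw [hm'top]
    have : PhiGen μ I (⊤ : ℝ≥0∞).toReal = 0 := by
      simp [PhiGen, min_eq_left (zero_le : 0 ≤ μ Set.univ / 2)]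
    rw [this]
    exact mul_nonneg hK0 hr.le
  by_cases hm'0 : m' = 0
  · rw [hm'0]
    have : PhiGen μ I (0 : ℝ≥0∞).toReal = 0 := by
      simp [PhiGen, min_eq_left (zero_le : 0 ≤ μ Set.univ / 2)]
    rw [this]
    exact mul_nonneg hK0 hr.le
  -- main case : 0 < m' < ⊤
  have m'leM : m' ≤ μ Set.univ := measure_mono (Set.subset_univ _)
  have hMne0 : μ Set.univ ≠ 0 := by
    intro h
    exact hm'0 (le_antisymm (h ▸ m'leM) zero_le)
  set c := min m' (μ Set.univ / 2) with hcdef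
  have hc_eq : min (ENNReal.ofReal m'.toReal) (μ Set.univ / 2) = c := by
    rw [ENNReal.ofReal_toReal hm'top]
  have hc_le_m' : c ≤ m' := min_le_left _ _
  have hc_ne_top : c ≠ ⊤ := fun h => hm'top (top_le_iff.mp (h ▸ hc_le_m'))
  have hc_pos : 0 < c :=
    lt_min (pos_iff_ne_zero.mpr hm'0) (ENNReal.div_pos hMne0 (by norm_num))
  set t0 := c.toReal with ht0def
  have ht0pos : 0 < t0 := ENNReal.toReal_pos hc_pos.ne' hc_ne_top
  have hoft0 : ENNReal.ofReal t0 = c := ENNReal.ofReal_toReal hc_ne_top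
  have ht0M : ENNReal.ofReal t0 < μ Set.univ := by
    rw [hoft0]
    by_cases hMtop : μ Set.univ = ⊤
    · exact lt_of_le_of_lt hc_le_m' (hMtop ▸ lt_top_iff_ne_top.mpr hm'top)
    · exact lt_of_le_of_lt (min_le_right _ _) (ENNReal.half_lt_self hMne0 hMtop)
  have hgoal_eq : PhiGen μ I m'.toReal = t0 / I t0 := by
    unfold PhiGen
    rw [hc_eq]
  -- key estimate for t < t0
  have hkey : ∀ t : ℝ, 0 < t → t < t0 → t / I t ≤ K * r := by
    intro t ht htlt
    have hoftc : ENNReal.ofReal t < c := by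
      rw [← hoft0]
      exact (ENNReal.ofReal_lt_ofReal_iff ht0pos).mpr htlt
    have hoftm' : ENNReal.ofReal t < m' := lt_of_lt_of_le hoftc hc_le_m'
    have hoftM : ENNReal.ofReal t < μ Set.univ := lt_of_lt_of_le hoftm' m'leM
    -- T t is nonempty
    have hne : (T t).Nonempty := by
      by_contra hemp
      rw [Set.not_nonempty_iff_eq_empty] at hemp
      by_cases hfin : ∃ s : ℝ, 0 ≤ s ∧ ν {u | s < g u} ≠ ⊤
      · rcases hfin with ⟨s₀, hs₀0, hs₀fin⟩
        set B : ℕ → Set ℝ := fun n => {u | s₀ + (n:ℝ) < g u} with hBdef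
        have hBmeas : ∀ n, NullMeasurableSet (B n) ν :=
          fun n => (measurableSet_lt measurable_const hg_meas).nullMeasurableSet
        have hBanti : Antitone B := by
          intro n n' hnn' u hu
          simp only [hBdef, Set.mem_setOf_eq] at hu ⊢
          refine lt_of_le_of_lt ?_ hu
          have : (n:ℝ) ≤ (n':ℝ) := Nat.cast_le.mpr hnn'
          linarith
        have hBfin : ∃ n, ν (B n) ≠ ⊤ := by
          refine ⟨0, ?_⟩
          have : B 0 = {u | s₀ < g u} := by
            ext u; simp [hBdef]
          rw [this]
          exact hs₀fin
        have hBempty : ⋂ n, B n = (∅ : Set ℝ) := by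
          ext u
          simp only [Set.mem_iInter, Set.mem_empty_iff_false, iff_false, not_forall]
          rcases exists_nat_gt (g u - s₀) with ⟨n, hn⟩
          exact ⟨n, by simp [hBdef]; linarith⟩
        have htend := MeasureTheory.tendsto_measure_iInter_atTop (μ := ν) hBmeas hBanti hBfin
        rw [hBempty, measure_empty] at htend
        have hev : ∀ᶠ n in atTop, ν (B n) < ENNReal.ofReal t :=
          htend.eventually_lt_const (ENNReal.ofReal_pos.mpr ht)
        rcases hev.exists with ⟨n, hn⟩
        have : (s₀ + (n:ℝ)) ∈ T t := ⟨by positivity, hn.le⟩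
        rw [hemp] at this
        exact this
      · push_neg at hfin
        have hall0 : ∀ u : ℝ, decRearr ν g u = 0 := by
          intro u
          have hTe : T u = ∅ := by
            rw [Set.eq_empty_iff_forall_notMem]
            rintro s ⟨hs0, hsle⟩
            have := hfin s hs0
            rw [this] at hsle
            exact absurd (top_le_iff.mp hsle) (by simp [ENNReal.ofReal_ne_top])
          rw [hdec, hTe]
          exact Real.sInf_empty
        have hAuniv : {x | (decRearr ν g (σ x))⁻¹ ≤ r} = Set.univ := by
          rw [Set.eq_univ_iff_forall]
          intro x
          simp [hall0 (σ x), hr.le]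
        have hMtop : μ Set.univ = ⊤ := by
          have h1 : ν {u | (0:ℝ) < g u} = ⊤ := hfin 0 le_rfl
          have h2 : (⊤:ℝ≥0∞) ≤ ν Set.univ := h1 ▸ measure_mono (Set.subset_univ _)
          rw [hνuniv] at h2
          exact top_le_iff.mp h2
        exact hm'top (by rw [hm'def, hAuniv, hMtop])
    -- decRearr ν g t ≥ 1/r
    have hge : 1/r ≤ decRearr ν g t := by
      by_contra hlt'
      push_neg at hlt'
      have hsub : {x | (decRearr ν g (σ x))⁻¹ ≤ r} ⊆
          σ ⁻¹' (Set.Icc 0 t) ∪ σ ⁻¹' (domSet μ)ᶜ := by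
        intro x hx
        by_cases hdx : σ x ∈ domSet μ
        · left
          refine ⟨hdx.1, ?_⟩
          by_contra hgt
          push_neg at hgt
          have hsub2 : T t ⊆ T (σ x) := hT_mono _ _ hgt.le
          have hle2 : decRearr ν g (σ x) ≤ decRearr ν g t := by
            rw [hdec, hdec]
            exact csInf_le_csInf (hT_bdd _) hne hsub2
          have hposx : 0 < decRearr ν g (σ x) := hpos _ (hne.mono hsub2) hdx.2
          have hlt3 : decRearr ν g (σ x) < 1/r := lt_of_le_of_lt hle2 hlt'
          have := one_div_lt_one_div_of_lt hposx hlt3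
          rw [one_div_one_div] at this
          have hx' : (decRearr ν g (σ x))⁻¹ ≤ r := hx
          rw [← one_div] at hx'
          exact absurd hx' (not_le.mpr this)
        · right
          exact hdx
      have hm'le : m' ≤ ENNReal.ofReal t := by
        have h1 : μ (σ ⁻¹' (Set.Icc 0 t)) = ν (Set.Icc 0 t) :=
          hσ.measure_preimage measurableSet_Icc.nullMeasurableSet
        have h2 : μ (σ ⁻¹' (domSet μ)ᶜ) = ν (domSet μ)ᶜ :=
          hσ.measure_preimage hdom_meas.compl.nullMeasurableSet
        have h3 : ν (Set.Icc 0 t) ≤ ENNReal.ofReal t := by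
          rw [hνdef, Measure.restrict_apply measurableSet_Icc]
          refine le_trans (measure_mono Set.inter_subset_left) ?_
          rw [Real.volume_Icc, sub_zero]
        have h4 : ν (domSet μ)ᶜ = 0 := by
          rw [hνdef, Measure.restrict_apply hdom_meas.compl]
          simp
        calc m' ≤ μ (σ ⁻¹' (Set.Icc 0 t) ∪ σ ⁻¹' (domSet μ)ᶜ) := measure_mono hsub
          _ ≤ μ (σ ⁻¹' (Set.Icc 0 t)) + μ (σ ⁻¹' (domSet μ)ᶜ) := measure_union_le _ _
          _ = ν (Set.Icc 0 t) + 0 := by rw [h1, h2, h4]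
          _ ≤ ENNReal.ofReal t := by rw [add_zero]; exact h3
      exact absurd hoftm' (not_lt.mpr hm'le)
    -- conclude the pointwise bound
    have hKt := hK t ht hoftM
    have hPhit : PhiGen μ I t = t / I t := by
      unfold PhiGen
      rw [min_eq_left (le_of_lt (lt_of_lt_of_le hoftc (min_le_right _ _))),
        ENNReal.toReal_ofReal ht.le]
    rw [hPhit] at hKt
    have hIt : 0 < I t := hIpos t ht hoftM
    have h1 : (1/r) * (t / I t) ≤ K :=
      le_trans (mul_le_mul_of_nonneg_right hge (div_nonneg ht.le hIt.le)) hKt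
    calc t / I t = r * ((1/r) * (t / I t)) := by field_simp
      _ ≤ r * K := mul_le_mul_of_nonneg_left h1 hr.le
      _ = K * r := mul_comm _ _
  -- pass to the limit t → t0
  rw [hgoal_eq]
  have ht0dom : t0 ∈ domSet μ := ⟨ht0pos.le, ht0M⟩
  have hsubdom : Set.Ioo (0:ℝ) t0 ⊆ domSet μ := by
    intro t htmem
    exact ⟨htmem.1.le,
      lt_trans ((ENNReal.ofReal_lt_ofReal_iff ht0pos).mpr htmem.2) ht0M⟩
  have hIt0 : I t0 ≠ 0 := (hIpos t0 ht0pos ht0M).ne'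
  have hf : ContinuousWithinAt (fun t => t / I t) (Set.Ioo 0 t0) t0 := by
    exact (continuousWithinAt_id).div ((hIcont t0 ht0dom).mono hsubdom) hIt0
  haveI : (𝓝[Set.Ioo (0:ℝ) t0] t0).NeBot := right_nhdsWithin_Ioo_neBot ht0pos
  exact le_of_tendsto hf
    (eventually_mem_nhdsWithin.mono (fun t htmem => hkey t htmem.1 htmem.2))
end
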